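/- arXiv:2201.03062 — 5 statements merged into one kernel-verified Lean document; each statement's English description precedes it below -/
import Mathlib

section
/- For any positive integers m and n, any real m×n matrix A, and any real number T>1, there exist p ∈ ℤ^m and q ∈ ℤ^n ∖ {0} such that ‖Aq − p‖^m ≤ 1/T and ‖q‖^n < T. -/
open MeasureTheory Filter Set

noncomputable section

/-- The coercion of an integer vector to a real vector (with the supremum norm). -/
def toR {k : ℕ} (q : Fin k → ℤ) : Fin k → ℝ := fun i => (q i : ℝ)

namespace DirichletAux

variable {m n : ℕ}

def U (A : Fin m → Fin n → ℝ) : Matrix (Fin m ⊕ Fin n) (Fin m ⊕ Fin n) ℝ :=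
  Matrix.fromBlocks 1 (Matrix.of A) 0 1

lemma detU (A : Fin m → Fin n → ℝ) : (U A).det = 1 := by
  rw [U, Matrix.det_fromBlocks_zero₂₁, Matrix.det_one, Matrix.det_one, one_mul]

def invU (A : Fin m → Fin n → ℝ) : Invertible (U A) :=
  (U A).invertibleOfIsUnitDet (by rw [detU]; exact isUnit_one)

def bas (A : Fin m → Fin n → ℝ) : Module.Basis (Fin m ⊕ Fin n) ℝ ((Fin m ⊕ Fin n) → ℝ) :=
  (Pi.basisFun ℝ _).map ((U A).toLinearEquiv' (invU A))

lemma bas_apply (A : Fin m → Fin n → ℝ) (k) : bas A k = (U A).transpose k := by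
  rw [bas, Module.Basis.map_apply, Pi.basisFun_apply]
  show Matrix.mulVec (U A) (Pi.single k 1) = _
  rw [Matrix.mulVec_single_one]
  rfl

lemma bas_val (A : Fin m → Fin n → ℝ) (k k') : bas A k k' = U A k' k := by
  rw [bas_apply]; rfl

lemma det_of_bas (A : Fin m → Fin n → ℝ) : (Matrix.of (bas A)).det = 1 := by
  have h : Matrix.of ⇑(bas A) = (U A).transpose := by
    ext k k'; exact bas_val A k k'
  rw [h, Matrix.det_transpose, detU]

lemma decomp (A : Fin m → Fin n → ℝ) (c : Fin m ⊕ Fin n → ℤ) :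
    ∑ k, c k • bas A k = Matrix.mulVec (U A) (fun k => (c k : ℝ)) := by
  ext k'
  simp only [Finset.sum_apply, Pi.smul_apply, zsmul_eq_mul, Pi.mul_apply, Pi.intCast_apply,
    bas_val, Matrix.mulVec, dotProduct]
  exact Finset.sum_congr rfl fun k _ => mul_comm _ _

lemma decomp_inl (A : Fin m → Fin n → ℝ) (c : Fin m ⊕ Fin n → ℤ) (i : Fin m) :
    (∑ k, c k • bas A k) (Sum.inl i) = (c (Sum.inl i) : ℝ) + ∑ j, A i j * (c (Sum.inr j) : ℝ) := by
  rw [decomp, U, Matrix.fromBlocks_mulVec]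
  simp [Matrix.mulVec, dotProduct]

lemma decomp_inr (A : Fin m → Fin n → ℝ) (c : Fin m ⊕ Fin n → ℤ) (j : Fin n) :
    (∑ k, c k • bas A k) (Sum.inr j) = (c (Sum.inr j) : ℝ) := by
  rw [decomp, U, Matrix.fromBlocks_mulVec]
  simp [Matrix.mulVec, dotProduct]

end DirichletAux

/-- **Dirichlet's Theorem** in higher dimensions: for any real `m × n` matrix `A` and any
real `T > 1`, there exist `p ∈ ℤ^m` and `q ∈ ℤ^n \ {0}` with `‖Aq - p‖^m ≤ 1/T` and
`‖q‖^n < T` (supremum norms). -/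
theorem stmt_0 (m n : ℕ) (hm : 0 < m) (hn : 0 < n)
    (A : Fin m → Fin n → ℝ) (T : ℝ) (hT : 1 < T) :
    ∃ (p : Fin m → ℤ) (q : Fin n → ℤ), q ≠ 0 ∧
      ‖(fun i => (∑ j, A i j * (q j : ℝ)) - (p i : ℝ) : Fin m → ℝ)‖ ^ m ≤ 1 / T ∧
      ‖toR q‖ ^ n < T := by

  classical
  by_contra hcon
  push_neg at hcon
  haveI : Nonempty (Fin m) := ⟨⟨0, hm⟩⟩
  haveI : Nonempty (Fin n) := ⟨⟨0, hn⟩⟩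
  have hT0 : (0:ℝ) < T := lt_trans one_pos hT
  set t : ℝ := T ^ ((n:ℝ)⁻¹) with ht_def
  have ht1 : 1 < t := (Real.one_lt_rpow_iff_of_pos hT0).mpr (Or.inl ⟨hT, by positivity⟩)
  have htn : t ^ n = T := by
    rw [ht_def, ← Real.rpow_natCast (T ^ ((n:ℝ)⁻¹)) n, ← Real.rpow_mul hT0.le,
      inv_mul_cancel₀ (by exact_mod_cast hn.ne'), Real.rpow_one]
  have ht0 : (0:ℝ) < t := lt_trans one_pos ht1
  set F : (Fin n → ℤ) → ℝ := fun q =>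
    ‖(fun i => (∑ j, A i j * (q j : ℝ)) -
        ((round (∑ j, A i j * (q j : ℝ)) : ℤ) : ℝ) : Fin m → ℝ)‖ with hF_def
  have hF_half : ∀ q, F q ≤ 1/2 := by
    intro q
    apply (pi_norm_le_iff_of_nonneg (by norm_num)).mpr
    intro i
    rw [Real.norm_eq_abs]
    exact abs_sub_round _
  set S : Finset (Fin n → ℤ) :=
    (Finset.Icc (fun _ => -⌈t⌉) (fun _ => ⌈t⌉)).filter (fun q => q ≠ 0 ∧ ‖toR q‖ < t) with hS_def
  have hmemS : ∀ q : Fin n → ℤ, q ≠ 0 → ‖toR q‖ < t → q ∈ S := by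
    intro q hq hqt
    rw [hS_def, Finset.mem_filter]
    have h1 : ∀ j, |(q j : ℝ)| < t := by
      intro j
      have h2 := norm_le_pi_norm (toR q) j
      rw [Real.norm_eq_abs] at h2
      exact lt_of_le_of_lt h2 hqt
    have hceil := Int.le_ceil t
    refine ⟨Finset.mem_Icc.mpr ⟨fun j => ?_, fun j => ?_⟩, hq, hqt⟩
    · show -⌈t⌉ ≤ q j
      have h4 := (abs_lt.mp (h1 j)).1
      have h3 : -((⌈t⌉ : ℤ) : ℝ) ≤ ((q j : ℤ) : ℝ) := by push_cast; linarith
      exact_mod_cast h3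
    · show q j ≤ ⌈t⌉
      have h4 := (abs_lt.mp (h1 j)).2
      have h3 : ((q j : ℤ) : ℝ) ≤ ((⌈t⌉ : ℤ) : ℝ) := by push_cast; linarith
      exact_mod_cast h3
  have hS_ne : S.Nonempty := by
    refine ⟨fun _ => 1, hmemS _ ?_ ?_⟩
    · intro h
      simpa using congrFun h ⟨0, hn⟩
    · have h1 : toR (fun _ => (1:ℤ)) = fun _ : Fin n => (1:ℝ) := by funext i; simp [toR]
      rw [h1]
      rw [show ‖(fun _ : Fin n => (1:ℝ))‖ = ‖(1:ℝ)‖ from pi_norm_const (1:ℝ)]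
      simpa using ht1
  have hd_lower : ∀ q ∈ S, 1/T < F q ^ m := by
    intro q hq
    rw [hS_def, Finset.mem_filter] at hq
    obtain ⟨-, hq0, hqt⟩ := hq
    by_contra hle
    push_neg at hle
    have h2 := hcon (fun i => round (∑ j, A i j * (q j : ℝ))) q hq0 hle
    have h3 : ‖toR q‖ ^ n < T := by
      calc ‖toR q‖ ^ n < t ^ n := pow_lt_pow_left₀ hqt (norm_nonneg _) hn.ne'
        _ = T := htn
    linarith
  obtain ⟨qs, hqsS, hd⟩ := S.exists_mem_eq_inf' hS_ne F
  set d := S.inf' hS_ne F with hd_def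
  have hdT : 1/T < d ^ m := by rw [hd]; exact hd_lower qs hqsS
  have hd_half : d ≤ 1/2 := by rw [hd]; exact hF_half qs
  have hd_pos : 0 < d := by
    by_contra h
    push_neg at h
    have h0 : d = 0 := le_antisymm h (by rw [hd]; exact norm_nonneg _)
    rw [h0, zero_pow hm.ne'] at hdT
    have : (0:ℝ) < 1 / T := by positivity
    linarith
  -- Minkowski setup
  set r : Fin m ⊕ Fin n → ℝ := Sum.elim (fun _ => d) (fun _ => t) with hr_def
  set s : Set ((Fin m ⊕ Fin n) → ℝ) := Set.univ.pi (fun k => Ioo (-(r k)) (r k)) with hs_def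
  have h_symm : ∀ x ∈ s, -x ∈ s := by
    intro x hx k _
    have h1 := hx k (Set.mem_univ k)
    simp only [Set.mem_Ioo, Pi.neg_apply] at *
    constructor <;> linarith [h1.1, h1.2]
  have h_conv : Convex ℝ s := convex_pi fun k _ => convex_Ioo _ _
  have hvols : volume s = ENNReal.ofReal ((2*d)^m * (2*t)^n) := by
    have h1 : ∀ k, volume (Ioo (-(r k)) (r k)) = ENNReal.ofReal (2 * r k) := by
      intro k; rw [Real.volume_Ioo]; congr 1; ring
    calc volume s = ∏ k, volume (Ioo (-(r k)) (r k)) := by rw [hs_def, volume_pi_pi]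
      _ = ∏ k, ENNReal.ofReal (2 * r k) := Finset.prod_congr rfl fun k _ => h1 k
      _ = (∏ _i : Fin m, ENNReal.ofReal (2*d)) * ∏ _j : Fin n, ENNReal.ofReal (2*t) :=
          Fintype.prod_sum_type _
      _ = ENNReal.ofReal (2*d) ^ m * ENNReal.ofReal (2*t) ^ n := by
          rw [Finset.prod_const, Finset.prod_const, Finset.card_univ, Finset.card_univ,
            Fintype.card_fin, Fintype.card_fin]
      _ = ENNReal.ofReal ((2*d)^m * (2*t)^n) := by
          rw [← ENNReal.ofReal_pow (by linarith), ← ENNReal.ofReal_pow (by linarith),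
            ← ENNReal.ofReal_mul (by positivity)]
  set bA := DirichletAux.bas A with hbA_def
  haveI : Countable ((Submodule.span ℤ (Set.range ⇑bA)).toAddSubgroup) :=
    inferInstanceAs (Countable (Submodule.span ℤ (Set.range ⇑bA)))
  have fund := ZSpan.isAddFundamentalDomain' bA (volume)
  have hcov : volume (ZSpan.fundamentalDomain bA) = 1 := by
    rw [ZSpan.volume_fundamentalDomain, hbA_def, DirichletAux.det_of_bas, abs_one,
      ENNReal.ofReal_one]
  have hrank : Module.finrank ℝ ((Fin m ⊕ Fin n) → ℝ) = m + n := by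
    rw [Module.finrank_pi]; simp
  have hlt : volume (ZSpan.fundamentalDomain bA) *
      2 ^ Module.finrank ℝ ((Fin m ⊕ Fin n) → ℝ) < volume s := by
    rw [hcov, one_mul, hvols, hrank]
    have h3 : 1 < d ^ m * T := by
      have := (div_lt_iff₀ hT0).mp hdT
      linarith
    have key : (2:ℝ)^(m+n) < (2*d)^m * (2*t)^n := by
      have h2 : (2*d)^m * (2*t)^n = 2^(m+n) * (d^m * t^n) := by
        rw [mul_pow, mul_pow, pow_add]; ring
      rw [h2, htn]
      calc (2:ℝ)^(m+n) = 2^(m+n) * 1 := by ring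
        _ < 2^(m+n) * (d^m*T) := by
            exact mul_lt_mul_of_pos_left h3 (by positivity)
    calc (2:ENNReal)^(m+n) = ENNReal.ofReal ((2:ℝ)^(m+n)) := by
          rw [ENNReal.ofReal_pow (by norm_num)]; norm_num
      _ < ENNReal.ofReal ((2*d)^m*(2*t)^n) :=
          (ENNReal.ofReal_lt_ofReal_iff (by positivity)).mpr key
  obtain ⟨x, hx0, hxs⟩ :=
    exists_ne_zero_mem_lattice_of_measure_mul_two_pow_lt_measure fund h_symm h_conv hlt
  have hxL : (x : (Fin m ⊕ Fin n) → ℝ) ∈ Submodule.span ℤ (Set.range ⇑bA) := x.2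
  obtain ⟨c, hc⟩ := (Submodule.mem_span_range_iff_exists_fun ℤ).mp hxL
  set q : Fin n → ℤ := fun j => c (Sum.inr j) with hq_def
  have hxr : ∀ j, (x : (Fin m ⊕ Fin n) → ℝ) (Sum.inr j) = (q j : ℝ) := by
    intro j; rw [← hc]; exact DirichletAux.decomp_inr A c j
  have hxl : ∀ i, (x : (Fin m ⊕ Fin n) → ℝ) (Sum.inl i)
      = (c (Sum.inl i) : ℝ) + ∑ j, A i j * (q j : ℝ) := by
    intro i; rw [← hc]; exact DirichletAux.decomp_inl A c i
  have hbl : ∀ i, |(x : (Fin m ⊕ Fin n) → ℝ) (Sum.inl i)| < d := by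
    intro i
    have h1 := hxs (Sum.inl i) (Set.mem_univ _)
    rw [Set.mem_Ioo] at h1
    exact abs_lt.mpr ⟨h1.1, h1.2⟩
  have hbr : ∀ j, |(q j : ℝ)| < t := by
    intro j
    have h1 := hxs (Sum.inr j) (Set.mem_univ _)
    rw [Set.mem_Ioo, hxr j] at h1
    exact abs_lt.mpr ⟨h1.1, h1.2⟩
  have hq0 : q ≠ 0 := by
    intro h
    apply hx0
    have hsum0 : ∀ i : Fin m, ∑ j, A i j * (q j : ℝ) = 0 := by
      intro i
      have : ∀ j, (q j : ℝ) = 0 := fun j => by rw [h]; simp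
      simp [this]
    have hc0 : ∀ i, c (Sum.inl i) = 0 := by
      intro i
      have h1 := hbl i
      rw [hxl i, hsum0 i, add_zero] at h1
      have h2 : |(c (Sum.inl i) : ℝ)| < 1 := lt_of_lt_of_le h1 (by linarith)
      have h3 : |c (Sum.inl i)| < 1 := by exact_mod_cast h2
      have h4 := abs_lt.mp h3
      omega
    have hx_eq : (x : (Fin m ⊕ Fin n) → ℝ) = 0 := by
      funext k
      cases k with
      | inl i => rw [hxl i, hc0 i, hsum0 i]; simp
      | inr j => rw [hxr j, h]; simp
    exact Subtype.ext (hx_eq.trans (ZeroMemClass.coe_zero _).symm)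
  have hqS : q ∈ S := by
    apply hmemS q hq0
    rw [pi_norm_lt_iff ht0]
    intro j
    rw [show toR q j = (q j : ℝ) from rfl, Real.norm_eq_abs]
    exact hbr j
  have h1 : d ≤ F q := Finset.inf'_le F hqS
  have h2 : F q < d := by
    rw [hF_def]
    apply (pi_norm_lt_iff hd_pos).mpr
    intro i
    rw [Real.norm_eq_abs]
    calc |(∑ j, A i j * (q j : ℝ)) - ((round (∑ j, A i j * (q j : ℝ)) : ℤ) : ℝ)|
        ≤ |(∑ j, A i j * (q j : ℝ)) - ((-(c (Sum.inl i)) : ℤ) : ℝ)| := round_le _ _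
      _ = |(x : (Fin m ⊕ Fin n) → ℝ) (Sum.inl i)| := by rw [hxl i]; push_cast; ring_nf
      _ < d := hbl i
  linarith
end
end

section
/- For any positive integers m and n and any real m×n matrix A, there exist infinitely many integer vectors q ∈ ℤ^n such that ‖Aq − p‖^m ≤ 1/‖q‖^n for some p ∈ ℤ^m. -/
open MeasureTheory Filter Set

noncomputable section

lemma abs_sub_lt_one_of_floor_eq' {a b : ℝ} (h : ⌊a⌋ = ⌊b⌋) : |a - b| < 1 := by
  have h1 := Int.floor_le a
  have h2 := Int.lt_floor_add_one a
  have h3 := Int.floor_le b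
  have h4 := Int.lt_floor_add_one b
  rw [h] at h1 h2
  rw [abs_sub_lt_iff]
  constructor <;> linarith

lemma round_min' (x : ℝ) (p : ℤ) : |x - (round x : ℝ)| ≤ |x - (p : ℝ)| := by
  rcases eq_or_ne p (round x) with rfl | hne
  · exact le_refl _
  · have h1 : |x - (round x : ℝ)| ≤ 1 / 2 := abs_sub_round x
    have h2 : (1 : ℤ) ≤ |p - round x| := Int.one_le_abs (sub_ne_zero.2 hne)
    have h2' : (1 : ℝ) ≤ |(p : ℝ) - (round x : ℝ)| := by exact_mod_cast h2
    have h3 : |(p : ℝ) - (round x : ℝ)| ≤ |(p : ℝ) - x| + |x - (round x : ℝ)| :=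
      abs_sub_le _ _ _
    have h4 : |(p : ℝ) - x| = |x - (p : ℝ)| := abs_sub_comm _ _
    linarith

lemma dirichlet_step (m n : ℕ) (hm : 0 < m) (hn : 0 < n) (A : Fin m → Fin n → ℝ)
    (K : ℕ) (hK : 0 < K) :
    ∃ q : Fin n → ℤ, q ≠ 0 ∧ (∀ j, |q j| ≤ (K : ℤ) ^ m) ∧
      ∃ p : Fin m → ℤ, ∀ i, |(∑ j, A i j * (q j : ℝ)) - (p i : ℝ)| < 1 / (K : ℝ) ^ n := by
  set Q := K ^ m with hQdef
  set M := K ^ n with hMdef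
  have hQ : 0 < Q := pow_pos hK m
  have hM : 0 < M := pow_pos hK n
  have hMR : (0 : ℝ) < (M : ℝ) := by exact_mod_cast hM
  have hbox : ∀ (v : Fin n → Fin (Q + 1)) (i : Fin m),
      (⌊(M : ℝ) * Int.fract (∑ j, A i j * ((v j : ℕ) : ℝ))⌋).toNat < M := by
    intro v i
    have h0 : (0 : ℝ) ≤ Int.fract (∑ j, A i j * ((v j : ℕ) : ℝ)) := Int.fract_nonneg _
    have h1 : Int.fract (∑ j, A i j * ((v j : ℕ) : ℝ)) < 1 := Int.fract_lt_one _
    have hlt : ⌊(M : ℝ) * Int.fract (∑ j, A i j * ((v j : ℕ) : ℝ))⌋ < (M : ℤ) := by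
      apply Int.floor_lt.2
      push_cast
      nlinarith
    omega
  set F : (Fin n → Fin (Q + 1)) → (Fin m → Fin M) :=
    fun v i => ⟨_, hbox v i⟩ with hFdef
  have hcard : Fintype.card (Fin m → Fin M) < Fintype.card (Fin n → Fin (Q + 1)) := by
    simp only [Fintype.card_fun, Fintype.card_fin]
    have h1 : M ^ m = Q ^ n := by
      rw [hQdef, hMdef, ← pow_mul, ← pow_mul, Nat.mul_comm]
    rw [h1]
    exact Nat.pow_lt_pow_left (Nat.lt_succ_self Q) hn.ne'
  obtain ⟨v1, v2, hv, hF⟩ := Fintype.exists_ne_map_eq_of_card_lt F hcard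
  refine ⟨fun j => ((v1 j : ℕ) : ℤ) - ((v2 j : ℕ) : ℤ), ?_, ?_, ?_⟩
  · intro h
    apply hv
    funext j
    have := congrFun h j
    simp only [Pi.zero_apply, sub_eq_zero] at this
    have : (v1 j : ℕ) = (v2 j : ℕ) := by exact_mod_cast this
    exact Fin.ext this
  · intro j
    have h1 : (v1 j : ℕ) < Q + 1 := (v1 j).2
    have h2 : (v2 j : ℕ) < Q + 1 := (v2 j).2
    have hQK : ((K : ℤ) ^ m) = (Q : ℤ) := by rw [hQdef]; push_cast; ring
    show |((v1 j : ℕ) : ℤ) - ((v2 j : ℕ) : ℤ)| ≤ (K : ℤ) ^ m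
    rw [hQK, abs_le]
    omega
  · refine ⟨fun i => ⌊∑ j, A i j * ((v1 j : ℕ) : ℝ)⌋ - ⌊∑ j, A i j * ((v2 j : ℕ) : ℝ)⌋,
      fun i => ?_⟩
    set x := ∑ j, A i j * ((v1 j : ℕ) : ℝ) with hx
    set y := ∑ j, A i j * ((v2 j : ℕ) : ℝ) with hy
    have hFi := congrFun hF i
    have hfloor_eq : ⌊(M : ℝ) * Int.fract x⌋ = ⌊(M : ℝ) * Int.fract y⌋ := by
      have h1 : (⌊(M : ℝ) * Int.fract x⌋).toNat = (⌊(M : ℝ) * Int.fract y⌋).toNat := by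
        simpa [hFdef, Fin.ext_iff] using hFi
      have h2 : (0 : ℤ) ≤ ⌊(M : ℝ) * Int.fract x⌋ :=
        Int.floor_nonneg.2 (mul_nonneg hMR.le (Int.fract_nonneg _))
      have h3 : (0 : ℤ) ≤ ⌊(M : ℝ) * Int.fract y⌋ :=
        Int.floor_nonneg.2 (mul_nonneg hMR.le (Int.fract_nonneg _))
      omega
    have h1 : |(M : ℝ) * Int.fract x - (M : ℝ) * Int.fract y| < 1 :=
      abs_sub_lt_one_of_floor_eq' hfloor_eq
    rw [← mul_sub, abs_mul, abs_of_pos hMR] at h1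
    have h2 : |Int.fract x - Int.fract y| < 1 / (M : ℝ) := by
      rw [lt_div_iff₀ hMR, mul_comm]
      exact h1
    have hsum : (∑ j, A i j * ((((v1 j : ℕ) : ℤ) - ((v2 j : ℕ) : ℤ) : ℤ) : ℝ)) = x - y := by
      rw [hx, hy, ← Finset.sum_sub_distrib]
      congr 1
      funext j
      push_cast
      ring
    have hMcast : ((M : ℝ)) = (K : ℝ) ^ n := by rw [hMdef]; push_cast; ring
    rw [hsum, ← hMcast]
    have : x - y - ((⌊x⌋ - ⌊y⌋ : ℤ) : ℝ) = Int.fract x - Int.fract y := by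
      rw [Int.fract, Int.fract]
      push_cast
      ring
    rw [this]
    exact h2

/-- For any real `m × n` matrix `A` there exist infinitely many integer vectors `q ∈ ℤ^n`
such that `‖Aq - p‖^m ≤ 1/‖q‖^n` for some `p ∈ ℤ^m` (supremum norms). -/
theorem stmt_1 (m n : ℕ) (hm : 0 < m) (hn : 0 < n) (A : Fin m → Fin n → ℝ) :
    {q : Fin n → ℤ | ∃ p : Fin m → ℤ,
      ‖(fun i => (∑ j, A i j * (q j : ℝ)) - (p i : ℝ) : Fin m → ℝ)‖ ^ m ≤
        1 / ‖toR q‖ ^ n}.Infinite := by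
  set S := {q : Fin n → ℤ | ∃ p : Fin m → ℤ,
      ‖(fun i => (∑ j, A i j * (q j : ℝ)) - (p i : ℝ) : Fin m → ℝ)‖ ^ m ≤
        1 / ‖toR q‖ ^ n} with hSdef
  -- membership criterion
  have hmem : ∀ (K : ℕ), 0 < K → ∀ (q : Fin n → ℤ) (p : Fin m → ℤ), q ≠ 0 →
      (∀ j, |q j| ≤ (K : ℤ) ^ m) →
      (∀ i, |(∑ j, A i j * (q j : ℝ)) - (p i : ℝ)| < 1 / (K : ℝ) ^ n) → q ∈ S := by
    intro K hK q p hq hqb hp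
    have hKR : (0 : ℝ) < (K : ℝ) := by exact_mod_cast hK
    have hKn : (0 : ℝ) < (K : ℝ) ^ n := pow_pos hKR n
    have hqR : toR q ≠ 0 := by
      intro h
      apply hq
      funext j
      have := congrFun h j
      simp only [toR, Pi.zero_apply] at this
      exact_mod_cast this
    have hqpos : (0 : ℝ) < ‖toR q‖ := norm_pos_iff.2 hqR
    have hqbound : ‖toR q‖ ≤ (K : ℝ) ^ m := by
      apply pi_norm_le_iff_of_nonneg (by positivity) |>.2
      intro j
      have := hqb j
      rw [Real.norm_eq_abs]
      show |((q j : ℤ) : ℝ)| ≤ (K : ℝ) ^ m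
      rw [← Int.cast_abs]
      exact_mod_cast this
    have hwbound : ‖(fun i => (∑ j, A i j * (q j : ℝ)) - (p i : ℝ) : Fin m → ℝ)‖ ≤
        1 / (K : ℝ) ^ n := by
      apply pi_norm_le_iff_of_nonneg (by positivity) |>.2
      intro i
      rw [Real.norm_eq_abs]
      exact (hp i).le
    refine ⟨p, ?_⟩
    calc ‖(fun i => (∑ j, A i j * (q j : ℝ)) - (p i : ℝ) : Fin m → ℝ)‖ ^ m
        ≤ (1 / (K : ℝ) ^ n) ^ m := pow_le_pow_left₀ (norm_nonneg _) hwbound m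
      _ = 1 / (K : ℝ) ^ (n * m) := by rw [div_pow, one_pow, ← pow_mul]
      _ ≤ 1 / ‖toR q‖ ^ n := by
          apply one_div_le_one_div_of_le (pow_pos hqpos n)
          calc ‖toR q‖ ^ n ≤ ((K : ℝ) ^ m) ^ n := pow_le_pow_left₀ hqpos.le hqbound n
            _ = (K : ℝ) ^ (n * m) := by rw [← pow_mul, Nat.mul_comm]
  by_cases hint : ∃ q0 : Fin n → ℤ, q0 ≠ 0 ∧ ∀ i, ∃ p : ℤ,
      (∑ j, A i j * (q0 j : ℝ)) = (p : ℝ)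
  · -- A q0 is integral: all multiples of q0 work
    obtain ⟨q0, hq0, hp0⟩ := hint
    choose p0 hp0 using hp0
    obtain ⟨j0, hj0⟩ : ∃ j, q0 j ≠ 0 := by
      by_contra h
      push_neg at h
      exact hq0 (funext h)
    apply Set.infinite_of_injective_forall_mem
      (f := fun k : ℕ => fun j => ((k : ℤ) + 1) * q0 j)
    · intro k1 k2 h
      have := congrFun h j0
      simp only at this
      have h2 : ((k1 : ℤ) + 1) = ((k2 : ℤ) + 1) := mul_right_cancel₀ hj0 this
      exact_mod_cast (by omega : (k1 : ℤ) = k2)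
    · intro k
      refine ⟨fun i => ((k : ℤ) + 1) * p0 i, ?_⟩
      have hzero : (fun i => (∑ j, A i j * ((((k : ℤ) + 1) * q0 j : ℤ) : ℝ)) -
          ((((k : ℤ) + 1) * p0 i : ℤ) : ℝ) : Fin m → ℝ) = 0 := by
        funext i
        simp only [Pi.zero_apply]
        push_cast
        have : (∑ j, A i j * (((k : ℝ) + 1) * (q0 j : ℝ))) =
            ((k : ℝ) + 1) * (∑ j, A i j * (q0 j : ℝ)) := by
          rw [Finset.mul_sum]
          congr 1
          funext j
          ring
        rw [this, hp0 i]
        ring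
      beta_reduce
      rw [hzero, norm_zero, zero_pow hm.ne']
      positivity
  · -- no nonzero integral point: use compactness-style min argument
    push_neg at hint
    by_contra hfin
    rw [Set.not_infinite] at hfin
    -- a nonzero element of S exists (K = 1)
    obtain ⟨q1, hq1ne, hq1b, p1, hp1⟩ := dirichlet_step m n hm hn A 1 Nat.one_pos
    have hq1S : q1 ∈ S := hmem 1 Nat.one_pos q1 p1 hq1ne hq1b hp1
    classical
    -- the "distance to nearest integer point" function
    set g : (Fin n → ℤ) → ℝ := fun q =>
      if h : ∃ i, ∀ p : ℤ, (∑ j, A i j * (q j : ℝ)) ≠ (p : ℝ) then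
        |(∑ j, A h.choose j * (q j : ℝ)) - ((round (∑ j, A h.choose j * (q j : ℝ)) : ℤ) : ℝ)|
      else 1 with hgdef
    have hgpos : ∀ q, q ∈ S → q ≠ 0 → 0 < g q := by
      intro q hqS hqne
      have hh : ∃ i, ∀ p : ℤ, (∑ j, A i j * (q j : ℝ)) ≠ (p : ℝ) := hint q hqne
      have : g q = |(∑ j, A hh.choose j * (q j : ℝ)) -
          ((round (∑ j, A hh.choose j * (q j : ℝ)) : ℤ) : ℝ)| := by
        rw [hgdef]; exact dif_pos hh
      rw [this]
      exact abs_pos.2 (sub_ne_zero.2 (hh.choose_spec _))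
    set F := hfin.toFinset.erase 0 with hFdef
    have hq1F : q1 ∈ F := Finset.mem_erase.2 ⟨hq1ne, hfin.mem_toFinset.2 hq1S⟩
    have hFne : F.Nonempty := ⟨q1, hq1F⟩
    set ε := F.inf' hFne g with hεdef
    have hεpos : 0 < ε := by
      rw [hεdef, Finset.lt_inf'_iff]
      intro q hqF
      obtain ⟨hqne, hqS⟩ := Finset.mem_erase.1 hqF
      exact hgpos q (hfin.mem_toFinset.1 hqS) hqne
    obtain ⟨K, hKgt⟩ := exists_nat_gt (1 / ε)
    have hc1 : (1 : ℝ) ≤ ((K + 1 : ℕ) : ℝ) := by push_cast; linarith [Nat.cast_nonneg (α := ℝ) K]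
    have hcpos : (0 : ℝ) < ((K + 1 : ℕ) : ℝ) := by linarith
    have hcn : ((K + 1 : ℕ) : ℝ) ≤ ((K + 1 : ℕ) : ℝ) ^ n := le_self_pow₀ hc1 hn.ne'
    have hcnpos : (0 : ℝ) < ((K + 1 : ℕ) : ℝ) ^ n := pow_pos hcpos n
    have hsmall : 1 / ((K + 1 : ℕ) : ℝ) ^ n < ε := by
      have h1 : 1 / ε < ((K + 1 : ℕ) : ℝ) := by push_cast; push_cast at hKgt; linarith
      have h2 : 1 < ((K + 1 : ℕ) : ℝ) * ε := (div_lt_iff₀ hεpos).1 h1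
      rw [div_lt_iff₀ hcnpos]
      nlinarith
    obtain ⟨q, hqne, hqb, p, hp⟩ := dirichlet_step m n hm hn A (K + 1) (Nat.succ_pos K)
    have hqS : q ∈ S := hmem (K + 1) (Nat.succ_pos K) q p hqne hqb hp
    have hqF : q ∈ F := Finset.mem_erase.2 ⟨hqne, hfin.mem_toFinset.2 hqS⟩
    have hεle : ε ≤ g q := Finset.inf'_le g hqF
    have hh : ∃ i, ∀ p : ℤ, (∑ j, A i j * (q j : ℝ)) ≠ (p : ℝ) := hint q hqne
    have hgq : g q = |(∑ j, A hh.choose j * (q j : ℝ)) -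
        ((round (∑ j, A hh.choose j * (q j : ℝ)) : ℤ) : ℝ)| := by
      rw [hgdef]; exact dif_pos hh
    have h1 : g q ≤ |(∑ j, A hh.choose j * (q j : ℝ)) - ((p hh.choose : ℤ) : ℝ)| := by
      rw [hgq]
      have := round_min' (∑ j, A hh.choose j * (q j : ℝ)) (p hh.choose)
      simpa using this
    have h2 := hp hh.choose
    linarith
end
end

section
/- Let ψ : [T_0,∞) → ℝ_+ be a continuous, nonincreasing function with T_0 ∈ ℝ_+, and let m,n be positive integers. Then there exists a continuous function z : [t_0,∞) → ℝ, where t_0 := (m/(m+n))·log T_0 − (n/(m+n))·log ψ(T_0), such that: (i) t ↦ t + n·z(t) is strictly increasing and unbounded; (ii) t ↦ t − m·z(t) is nondecreasing; and (iii) ψ(e^{t+n·z(t)}) = e^{−t+m·z(t)} for all t ≥ t_0. -/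
open MeasureTheory Filter Set

noncomputable section

/-- **Dani correspondence (Kleinbock–Margulis)**: for a continuous nonincreasing
`ψ : [T₀,∞) → ℝ₊` there is a continuous function `z : [t₀,∞) → ℝ`, where
`t₀ = (m/(m+n))·log T₀ − (n/(m+n))·log ψ(T₀)`, such that (i) `t ↦ t + n·z(t)` is strictly
increasing and unbounded, (ii) `t ↦ t − m·z(t)` is nondecreasing, and
(iii) `ψ(e^{t+n·z(t)}) = e^{−t+m·z(t)}` for all `t ≥ t₀`. -/
theorem stmt_11 (m n : ℕ) (hm : 0 < m) (hn : 0 < n) (T₀ : ℝ) (hT₀ : 0 < T₀)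
    (ψ : ℝ → ℝ) (hψc : ContinuousOn ψ (Set.Ici T₀))
    (hψmono : AntitoneOn ψ (Set.Ici T₀)) (hψpos : ∀ x ≥ T₀, 0 < ψ x)
    (t₀ : ℝ)
    (ht₀ : t₀ = ((m : ℝ) / (m + n)) * Real.log T₀ - ((n : ℝ) / (m + n)) * Real.log (ψ T₀)) :
    ∃ z : ℝ → ℝ,
      ContinuousOn z (Set.Ici t₀) ∧
      StrictMonoOn (fun t => t + n * z t) (Set.Ici t₀) ∧
      (∀ C : ℝ, ∃ t ≥ t₀, C < t + n * z t) ∧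
      MonotoneOn (fun t => t - m * z t) (Set.Ici t₀) ∧
      ∀ t ≥ t₀, ψ (Real.exp (t + n * z t)) = Real.exp (-t + m * z t) := by
  have hM : (0:ℝ) < (m:ℝ) := by exact_mod_cast hm
  have hN : (0:ℝ) < (n:ℝ) := by exact_mod_cast hn
  have hMN : (0:ℝ) < (m:ℝ) + n := by positivity
  have hMN' : ((m:ℝ) + n) ≠ 0 := ne_of_gt hMN
  -- extended ψ
  set ψt : ℝ → ℝ := fun x => ψ (max x T₀) with hψtdef
  have hψtc : Continuous ψt :=
    hψc.comp_continuous (continuous_id.max continuous_const)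
      (fun x => mem_Ici.mpr (le_max_right _ _))
  have hψtanti : Antitone ψt := fun a b hab =>
    hψmono (mem_Ici.mpr (le_max_right _ _)) (mem_Ici.mpr (le_max_right _ _))
      (max_le_max hab le_rfl)
  have hψtpos : ∀ x, 0 < ψt x := fun x => hψpos _ (le_max_right _ _)
  -- g
  set g : ℝ → ℝ := fun s => Real.log (ψt (Real.exp s)) with hgdef
  have hgc : Continuous g :=
    (hψtc.comp Real.continuous_exp).log (fun x => ne_of_gt (hψtpos _))
  have hganti : Antitone g := fun a b hab =>
    Real.log_le_log (hψtpos _) (hψtanti (Real.exp_le_exp.mpr hab))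
  have hgle : ∀ s, g s ≤ Real.log (ψ T₀) := by
    intro s
    exact Real.log_le_log (hψtpos _)
      (hψmono (mem_Ici.mpr le_rfl) (mem_Ici.mpr (le_max_right _ _)) (le_max_right _ _))
  have hgeq : ∀ s ≤ Real.log T₀, g s = Real.log (ψ T₀) := by
    intro s hs
    have : Real.exp s ≤ T₀ := by
      calc Real.exp s ≤ Real.exp (Real.log T₀) := Real.exp_le_exp.mpr hs
        _ = T₀ := Real.exp_log hT₀
    simp only [hgdef, hψtdef, max_eq_right this]
  -- F
  set F : ℝ → ℝ := fun s => ((m:ℝ) * s - (n:ℝ) * g s) / ((m:ℝ) + n) with hFdef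
  have hFc : Continuous F := by
    apply Continuous.div_const
    exact (continuous_const.mul continuous_id).sub (continuous_const.mul hgc)
  have hFmono : StrictMono F := by
    intro a b hab
    have h1 : (m:ℝ) * a < m * b := by nlinarith
    have h2 : (n:ℝ) * g b ≤ n * g a := by nlinarith [hganti hab.le]
    have : (m:ℝ) * a - n * g a < m * b - n * g b := by linarith
    exact div_lt_div_of_pos_right this hMN
  have hFtop : Tendsto F atTop atTop := by
    apply tendsto_atTop_mono (f := fun s => ((m:ℝ) * s - n * Real.log (ψ T₀)) / ((m:ℝ) + n))
    · intro s
      have := hgle s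
      have hnum : (m:ℝ) * s - n * Real.log (ψ T₀) ≤ (m:ℝ) * s - n * g s := by nlinarith
      exact div_le_div_of_nonneg_right hnum hMN.le
    · apply Tendsto.atTop_div_const hMN
      apply tendsto_atTop_add_const_right
      exact (tendsto_id.const_mul_atTop hM)
  have hFbot : Tendsto F atBot atBot := by
    have heq : F =ᶠ[atBot] fun s => ((m:ℝ) * s - n * Real.log (ψ T₀)) / ((m:ℝ) + n) := by
      filter_upwards [eventually_le_atBot (Real.log T₀)] with s hs
      simp [hFdef, hgeq s hs]
    rw [tendsto_congr' heq]
    apply Tendsto.atBot_div_const hMN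
    apply tendsto_atBot_add_const_right
    exact tendsto_id.const_mul_atBot hM
  have hFsurj : Function.Surjective F := hFc.surjective hFtop hFbot
  -- the order iso and its inverse
  set E : ℝ ≃o ℝ := StrictMono.orderIsoOfSurjective F hFmono hFsurj with hEdef
  set σ : ℝ → ℝ := fun t => E.symm t with hσdef
  have hEF : ∀ s, E s = F s := fun s => rfl
  have hFσ : ∀ t, F (σ t) = t := fun t => E.apply_symm_apply t
  have hσF : ∀ s, σ (F s) = s := fun s => E.symm_apply_apply s
  have hσc : Continuous σ := E.symm.continuous
  have hσmono : StrictMono σ := E.symm.strictMono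
  have key : ∀ t, t * ((m:ℝ) + n) = (m:ℝ) * σ t - n * g (σ t) := by
    intro t
    have := hFσ t
    simp only [hFdef] at this
    field_simp at this
    linarith
  -- t₀ = F (log T₀)
  have ht₀F : t₀ = F (Real.log T₀) := by
    simp only [hFdef, ht₀, hgeq (Real.log T₀) le_rfl]
    field_simp
  -- z
  set z : ℝ → ℝ := fun t => (σ t + g (σ t)) / ((m:ℝ) + n) with hzdef
  have hz1 : ∀ t, t + (n:ℝ) * z t = σ t := by
    intro t
    simp only [hzdef]
    field_simp
    linear_combination key t
  have hz2 : ∀ t, t - (m:ℝ) * z t = - g (σ t) := by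
    intro t
    simp only [hzdef]
    field_simp
    linear_combination key t
  have hσge : ∀ t ≥ t₀, Real.log T₀ ≤ σ t := by
    intro t ht
    have := hσmono.monotone (ht₀F ▸ ht)
    rwa [hσF] at this
  refine ⟨z, ?_, ?_, ?_, ?_, ?_⟩
  · exact ((hσc.add (hgc.comp hσc)).div_const _).continuousOn
  · intro a _ b _ hab
    simp only [hz1]
    exact hσmono hab
  · intro C
    refine ⟨F (max (C + 1) (Real.log T₀)), ?_, ?_⟩
    · rw [ht₀F]
      exact (hFmono.monotone (le_max_right _ _))
    · rw [hz1, hσF]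
      calc C < C + 1 := by linarith
        _ ≤ _ := le_max_left _ _
  · intro a _ b _ hab
    simp only [hz2]
    have := hganti (hσmono.monotone hab)
    linarith
  · intro t ht
    rw [hz1]
    have hle : T₀ ≤ Real.exp (σ t) := by
      calc T₀ = Real.exp (Real.log T₀) := (Real.exp_log hT₀).symm
        _ ≤ Real.exp (σ t) := Real.exp_le_exp.mpr (hσge t ht)
    have h1 : ψ (Real.exp (σ t)) = ψt (Real.exp (σ t)) := by
      simp [hψtdef, max_eq_left hle]
    have h2 : -t + (m:ℝ) * z t = g (σ t) := by
      have := hz2 t; linarith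
    rw [h1, h2, hgdef, Real.exp_log (hψtpos _)]
end
end

section
/- Let m,n be positive integers and ψ : [T_0,∞) → ℝ_+ be continuous and nonincreasing. Let z : [t_0,∞) → ℝ (with t_0 = (m/(m+n))log T_0 − (n/(m+n))log ψ(T_0)) be a continuous function such that t ↦ t+n·z(t) is strictly increasing and unbounded, t ↦ t−m·z(t) is nondecreasing, and ψ(e^{t+n·z(t)}) = e^{−t+m·z(t)} for all t ≥ t_0. Let f be a dimension function satisfying conditions (C1) and (C2) for some α > 0 and some s with nm−n < s ≤ nm. Then ∑_{q=⌈T_0⌉}^∞ (1/(ψ(q)q²))·(q^{1/n}/ψ(q)^{1/m})^{mn}·f(ψ(q)^{1/m}/q^{1/n}) < ∞ if and only if ∑_{t=⌈t_0⌉}^∞ e^{−(m+n)z(t)}·e^{(m+n)t}·f(e^{−(m+n)t/(mn)}) < ∞. -/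
open MeasureTheory Filter Set

noncomputable section

/-- A dimension function: an increasing continuous function `f : ℝ₊ → ℝ₊` with
`f(r) → 0` as `r → 0`. -/
def IsDimFunction (f : ℝ → ℝ) : Prop :=
  (∀ r > (0:ℝ), 0 < f r) ∧ MonotoneOn f (Set.Ioi 0) ∧ ContinuousOn f (Set.Ioi 0) ∧
    Filter.Tendsto f (nhdsWithin 0 (Set.Ioi 0)) (nhds 0)

/-- Condition (C1): `f(xy) ≍ x^s f(y)` for all `x, y > 0` with `y^α ≤ x ≤ y^{1/α}`. -/
def CondC1 (f : ℝ → ℝ) (s α : ℝ) : Prop :=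
  ∃ c₁ > (0:ℝ), ∃ c₂ > (0:ℝ), ∀ x > (0:ℝ), ∀ y > (0:ℝ),
    y ^ α ≤ x → x ≤ y ^ (1/α) →
      c₁ * x ^ s * f y ≤ f (x * y) ∧ f (x * y) ≤ c₂ * x ^ s * f y

/-- Condition (C2): `f'(x) = a(x)·f(x)/x` with `a(x) → s` as `x → 0`. -/
def CondC2 (f : ℝ → ℝ) (s : ℝ) : Prop :=
  ∃ a : ℝ → ℝ, (∀ x > (0:ℝ), HasDerivAt f (a x * f x / x) x) ∧
    Filter.Tendsto a (nhdsWithin 0 (Set.Ioi 0)) (nhds s)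

private lemma aux_fratio (f : ℝ → ℝ) (hf : IsDimFunction f) (s σ : ℝ) (hC2 : CondC2 f s)
    (hσ : s < σ) :
    ∃ δ : ℝ, 0 < δ ∧ ∀ a b : ℝ, 0 < a → a ≤ b → b ≤ δ →
      f b ≤ f a * (b / a) ^ σ := by
  obtain ⟨A, hAd, hAl⟩ := hC2
  have h1 : ∀ᶠ x in nhdsWithin 0 (Set.Ioi 0), A x < σ :=
    hAl.eventually (eventually_lt_nhds hσ)
  rw [eventually_nhdsWithin_iff] at h1
  obtain ⟨ε, hε, hball⟩ := Metric.eventually_nhds_iff.mp h1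
  set δ := ε / 2 with hδ
  have hδ0 : 0 < δ := by positivity
  have hAσ : ∀ x : ℝ, 0 < x → x ≤ δ → A x < σ := by
    intro x hx0 hxδ
    apply hball
    · rw [Real.dist_eq, sub_zero, abs_of_pos hx0]
      linarith
    · exact hx0
  have hder : ∀ x : ℝ, 0 < x →
      HasDerivAt (fun y => f y * y ^ (-σ)) ((A x * f x / x) * x ^ (-σ) + f x * (-σ * x ^ (-σ - 1))) x := by
    intro x hx0
    exact (hAd x hx0).mul (Real.hasDerivAt_rpow_const (Or.inl (ne_of_gt hx0)))
  have key : AntitoneOn (fun y => f y * y ^ (-σ)) (Set.Ioc 0 δ) := by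
    apply antitoneOn_of_deriv_nonpos (convex_Ioc 0 δ)
    · intro x hx
      exact ((hder x hx.1).continuousAt).continuousWithinAt
    · intro x hx
      rw [interior_Ioc] at hx
      exact ((hder x hx.1).differentiableAt).differentiableWithinAt
    · intro x hx
      rw [interior_Ioc] at hx
      have hx0 : 0 < x := hx.1
      rw [(hder x hx0).deriv]
      have hAx : A x < σ := hAσ x hx0 hx.2.le
      have hfx : 0 < f x := hf.1 x hx0
      have hxp : (0:ℝ) < x ^ (-σ - 1) := Real.rpow_pos_of_pos hx0 _
      have hxe : x ^ (-σ) = x ^ (-σ - 1) * x := by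
        rw [← Real.rpow_add_one (ne_of_gt hx0)]
        ring_nf
      rw [hxe]
      have heq : A x * f x / x * (x ^ (-σ - 1) * x) + f x * (-σ * x ^ (-σ - 1))
          = (A x - σ) * (f x * x ^ (-σ - 1)) := by
        field_simp
        ring
      rw [heq]
      apply mul_nonpos_of_nonpos_of_nonneg
      · linarith
      · positivity
  refine ⟨δ, hδ0, ?_⟩
  intro a b ha hab hbδ
  have hb0 : 0 < b := lt_of_lt_of_le ha hab
  have h := key (show a ∈ Set.Ioc 0 δ from ⟨ha, hab.trans hbδ⟩) ⟨hb0, hbδ⟩ hab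
  -- h : f b * b ^ (-σ) ≤ f a * a ^ (-σ)
  have hbσ : (0:ℝ) < b ^ σ := Real.rpow_pos_of_pos hb0 _
  have haσ : (0:ℝ) < a ^ σ := Real.rpow_pos_of_pos ha _
  have hb' : b ^ (-σ) = (b ^ σ)⁻¹ := Real.rpow_neg hb0.le σ
  have ha' : a ^ (-σ) = (a ^ σ)⁻¹ := Real.rpow_neg ha.le σ
  simp only [] at h
  rw [hb', ha'] at h
  have hdiv : (b / a) ^ σ = b ^ σ / a ^ σ := Real.div_rpow hb0.le ha.le σ
  rw [hdiv]
  calc f b = f b * (b ^ σ)⁻¹ * b ^ σ := by field_simp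
    _ ≤ f a * (a ^ σ)⁻¹ * b ^ σ := mul_le_mul_of_nonneg_right h hbσ.le
    _ = f a * (b ^ σ / a ^ σ) := by ring

private lemma aux_mul_lb (c x : ℝ) (hc : -(3/2:ℝ) ≤ c) (h0 : 0 ≤ x) (h1 : x ≤ 1) :
    -(3/2:ℝ) ≤ c * x := by nlinarith

private lemma aux_mul_lb2 (c x : ℝ) (hc : (1/2:ℝ) ≤ c) (h0 : 0 ≤ x) : x/2 ≤ c * x := by
  nlinarith

private lemma aux_geom (r : ℝ) (hr0 : 0 ≤ r) (hr1 : r < 1) (K N T : ℕ) (cond : ℕ → Prop)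
    [DecidablePred cond] (h : ∀ j, cond j → j + N ≤ K) :
    ∑ j ∈ Finset.range T, (if cond j then r ^ (K - (j + N)) else 0) ≤ (1 - r)⁻¹ := by
  rw [← Finset.sum_filter]
  have h2 : ∑ j ∈ (Finset.range T).filter cond, r ^ (K - (j + N))
      ≤ ∑ i ∈ Finset.range (K + 1), r ^ i := by
    have hinj : ∀ a ∈ (Finset.range T).filter cond, ∀ b ∈ (Finset.range T).filter cond,
        K - (a + N) = K - (b + N) → a = b := by
      intro a ha b hb hab
      have h1 := h a (Finset.mem_filter.mp ha).2
      have h2 := h b (Finset.mem_filter.mp hb).2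
      omega
    rw [← Finset.sum_image hinj]
    apply Finset.sum_le_sum_of_subset_of_nonneg
    · intro i hi
      simp only [Finset.mem_image, Finset.mem_filter, Finset.mem_range] at hi ⊢
      omega
    · intro i _ _
      positivity
  refine h2.trans ?_
  have h3 := Summable.sum_le_tsum (Finset.range (K + 1)) (fun i _ => pow_nonneg hr0 i)
      (summable_geometric_of_lt_one hr0 hr1)
  rwa [tsum_geometric_of_lt_one hr0 hr1] at h3



set_option maxHeartbeats 2000000

/-- **Series equivalence for the Dani correspondence**: with `z = z_ψ` the function
associated to `ψ` and `f` a dimension function satisfying (C1) and (C2) with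
`nm − n < s ≤ nm`, the series `∑_{q≥T₀} (1/(ψ(q)q²))·(q^{1/n}/ψ(q)^{1/m})^{mn}·
f(ψ(q)^{1/m}/q^{1/n})` converges if and only if the series
`∑_{t≥t₀} e^{−(m+n)z(t)}·e^{(m+n)t}·f(e^{−(m+n)t/(mn)})` converges. -/
theorem stmt_13 (m n : ℕ) (hm : 0 < m) (hn : 0 < n) (T₀ : ℝ) (hT₀ : 1 < T₀)
    (ψ : ℝ → ℝ) (hψc : ContinuousOn ψ (Set.Ici T₀))
    (hψmono : AntitoneOn ψ (Set.Ici T₀)) (hψpos : ∀ x ≥ T₀, 0 < ψ x)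
    (t₀ : ℝ)
    (ht₀ : t₀ = ((m : ℝ) / (m + n)) * Real.log T₀ - ((n : ℝ) / (m + n)) * Real.log (ψ T₀))
    (z : ℝ → ℝ) (hzc : ContinuousOn z (Set.Ici t₀))
    (hz1 : StrictMonoOn (fun t => t + n * z t) (Set.Ici t₀))
    (hz1' : ∀ C : ℝ, ∃ t ≥ t₀, C < t + n * z t)
    (hz2 : MonotoneOn (fun t => t - m * z t) (Set.Ici t₀))
    (hz3 : ∀ t ≥ t₀, ψ (Real.exp (t + n * z t)) = Real.exp (-t + m * z t))
    (f : ℝ → ℝ) (hf : IsDimFunction f) (α s : ℝ) (hα : 0 < α)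
    (hs1 : (n : ℝ) * m - n < s) (hs2 : s ≤ (n : ℝ) * m)
    (hC1 : CondC1 f s α) (hC2 : CondC2 f s) :
    Summable (fun q : ℕ => if T₀ ≤ (q:ℝ) then
        1 / (ψ q * (q:ℝ)^2) * ((q:ℝ) ^ ((1:ℝ)/n) / (ψ q) ^ ((1:ℝ)/m)) ^ (m * n) *
          f ((ψ q) ^ ((1:ℝ)/m) / (q:ℝ) ^ ((1:ℝ)/n)) else 0) ↔
    Summable (fun t : ℕ => if t₀ ≤ (t:ℝ) then
        Real.exp (-(m + n : ℝ) * z t) * Real.exp ((m + n : ℝ) * t) *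
          f (Real.exp (-((m + n : ℝ) * t) / (m * n))) else 0) := by
  classical
  have hm0 : (0:ℝ) < m := by exact_mod_cast hm
  have hn0 : (0:ℝ) < n := by exact_mod_cast n.pos_of_ne_zero (by omega)
  have hm1 : (1:ℝ) ≤ m := by exact_mod_cast hm
  have hn1 : (1:ℝ) ≤ n := by exact_mod_cast hn
  obtain ⟨hfpos, hfmono, hfcont, hftend⟩ := hf
  set LL : ℝ → ℝ := fun t => t + n * z t with hLLdef
  set MM : ℝ → ℝ := fun t => t - m * z t with hMMdef
  have hLmono : ∀ t t', t₀ ≤ t → t ≤ t' → LL t ≤ LL t' := fun t t' ht htt' =>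
    hz1.monotoneOn ht (ht.trans htt') htt'
  have hLlt : ∀ t t', t₀ ≤ t → t < t' → LL t < LL t' := fun t t' ht htt' =>
    hz1 ht (ht.trans htt'.le) htt'
  have hMmono : ∀ t t', t₀ ≤ t → t ≤ t' → MM t ≤ MM t' := fun t t' ht htt' =>
    hz2 ht (ht.trans htt') htt'
  have hLM_id : ∀ t : ℝ, (m:ℝ) * LL t + n * MM t = (m + n) * t := by
    intro t; simp only [hLLdef, hMMdef]; ring
  have hΔL : ∀ t t', t₀ ≤ t → t ≤ t' → (m:ℝ) * (LL t' - LL t) ≤ (m + n) * (t' - t) := by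
    intro t t' ht htt'
    have h2 := hMmono t t' ht htt'
    simp only [hMMdef] at h2
    have hz' : (m:ℝ) * (z t' - z t) ≤ t' - t := by linarith
    have h3 := mul_le_mul_of_nonneg_left hz' hn0.le
    simp only [hLLdef]
    nlinarith
  have hΔM : ∀ t t', t₀ ≤ t → t ≤ t' → (n:ℝ) * (MM t' - MM t) ≤ (m + n) * (t' - t) := by
    intro t t' ht htt'
    have h2 := hLmono t t' ht htt'
    simp only [hLLdef] at h2
    have hz' : -(t' - t) ≤ (n:ℝ) * (z t' - z t) := by linarith
    have h3 := mul_le_mul_of_nonneg_left hz' hm0.le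
    simp only [hMMdef]
    nlinarith
  have hψL : ∀ t, t₀ ≤ t → ψ (Real.exp (LL t)) = Real.exp (-(MM t)) := by
    intro t ht
    have h := hz3 t ht
    simp only [hLLdef, hMMdef]
    rw [h]
    congr 1
    ring
  -- surjectivity of LL onto [LL t₀, ∞)
  have hsurj : ∀ ℓ : ℝ, LL t₀ ≤ ℓ → ∃ t, t₀ ≤ t ∧ LL t = ℓ := by
    intro ℓ hℓ
    obtain ⟨T, hT0, hTℓ⟩ := hz1' ℓ
    have hcont : ContinuousOn LL (Set.Icc t₀ T) := by
      apply ContinuousOn.add continuousOn_id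
      exact continuousOn_const.mul (hzc.mono (Set.Icc_subset_Ici_self))
    obtain ⟨t, ht, hteq⟩ := intermediate_value_Icc hT0 hcont ⟨hℓ, le_of_lt hTℓ⟩
    exact ⟨t, ht.1, hteq⟩
  choose! τ hτ₁ hτ₂ using hsurj
  have hτ_ge : ∀ ℓ t, t₀ ≤ t → LL t ≤ ℓ → t ≤ τ ℓ := by
    intro ℓ t ht h
    by_contra hc
    push_neg at hc
    have hℓ0 : LL t₀ ≤ ℓ := le_trans (hLmono t₀ t le_rfl ht) h
    have h2 := hLlt (τ ℓ) t (hτ₁ ℓ hℓ0) hc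
    rw [hτ₂ ℓ hℓ0] at h2
    linarith
  -- σ and the f-ratio bound
  set σ : ℝ := s + 1/2 with hσdef
  have hσs : s < σ := by simp only [hσdef]; linarith
  have hσpos : 0 < σ := by
    have h1 : (0:ℝ) ≤ (n:ℝ) * m - n := by nlinarith
    simp only [hσdef]; linarith
  have hσnm : σ ≤ (n:ℝ) * m + 1/2 := by simp only [hσdef]; linarith
  have hcM : (1:ℝ)/2 ≤ ((n:ℝ) + 1) - σ / m := by
    have h1 : σ ≤ ((n:ℝ) + 1/2) * m := by nlinarith
    have h2 : σ / m ≤ (n:ℝ) + 1/2 := by rw [div_le_iff₀ hm0]; linarith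
    linarith
  have hcL : -(3/2 : ℝ) ≤ ((m:ℝ) - 1) - σ / n := by
    have h1 : σ ≤ ((m:ℝ) + 1/2) * n := by nlinarith
    have h2 : σ / n ≤ (m:ℝ) + 1/2 := by rw [div_le_iff₀ hn0]; linarith
    linarith
  obtain ⟨δ, hδ0, hfub⟩ := aux_fratio f ⟨hfpos, hfmono, hfcont, hftend⟩ s σ hC2 hσs
  -- the function G
  set G : ℝ → ℝ → ℝ := fun ℓ M' =>
    Real.exp (((m:ℝ) - 1) * ℓ + ((n:ℝ) + 1) * M') * f (Real.exp (-(ℓ / n + M' / m))) with hGdef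
  have hGpos : ∀ ℓ M', 0 < G ℓ M' := fun ℓ M' =>
    mul_pos (Real.exp_pos _) (hfpos _ (Real.exp_pos _))
  have hGupper : ∀ ℓ M₁ ℓ' M₂, ℓ ≤ ℓ' → M₁ ≤ M₂ →
      G ℓ' M₂ ≤ Real.exp (((m:ℝ) - 1) * (ℓ' - ℓ) + ((n:ℝ) + 1) * (M₂ - M₁)) * G ℓ M₁ := by
    intro ℓ M₁ ℓ' M₂ hℓ hM
    have harg : Real.exp (-(ℓ' / n + M₂ / m)) ≤ Real.exp (-(ℓ / n + M₁ / m)) := by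
      apply Real.exp_le_exp.2
      have h1 : ℓ * (n:ℝ)⁻¹ ≤ ℓ' * (n:ℝ)⁻¹ := mul_le_mul_of_nonneg_right hℓ (inv_nonneg.2 hn0.le)
      have h2 : M₁ * (m:ℝ)⁻¹ ≤ M₂ * (m:ℝ)⁻¹ := mul_le_mul_of_nonneg_right hM (inv_nonneg.2 hm0.le)
      simp only [div_eq_mul_inv]
      linarith
    have hfle : f (Real.exp (-(ℓ' / n + M₂ / m))) ≤ f (Real.exp (-(ℓ / n + M₁ / m))) :=
      hfmono (Set.mem_Ioi.2 (Real.exp_pos _)) (Set.mem_Ioi.2 (Real.exp_pos _)) harg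
    simp only [hGdef]
    calc Real.exp (((m:ℝ) - 1) * ℓ' + ((n:ℝ) + 1) * M₂) * f (Real.exp (-(ℓ' / n + M₂ / m)))
        ≤ Real.exp (((m:ℝ) - 1) * ℓ' + ((n:ℝ) + 1) * M₂) * f (Real.exp (-(ℓ / n + M₁ / m))) :=
          mul_le_mul_of_nonneg_left hfle (Real.exp_pos _).le
      _ = Real.exp (((m:ℝ) - 1) * (ℓ' - ℓ) + ((n:ℝ) + 1) * (M₂ - M₁)) *
          (Real.exp (((m:ℝ) - 1) * ℓ + ((n:ℝ) + 1) * M₁) * f (Real.exp (-(ℓ / n + M₁ / m)))) := by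
          rw [← mul_assoc, ← Real.exp_add]
          congr 2
          ring
  have hGlower : ∀ ℓ M₁ ℓ' M₂, ℓ ≤ ℓ' → M₁ ≤ M₂ → Real.exp (-(ℓ / n + M₁ / m)) ≤ δ →
      Real.exp ((((m:ℝ) - 1) - σ / n) * (ℓ' - ℓ) + (((n:ℝ) + 1) - σ / m) * (M₂ - M₁)) * G ℓ M₁
        ≤ G ℓ' M₂ := by
    intro ℓ M₁ ℓ' M₂ hℓ hM hbδ
    set a : ℝ := Real.exp (-(ℓ' / n + M₂ / m)) with hadef
    set b : ℝ := Real.exp (-(ℓ / n + M₁ / m)) with hbdef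
    have hab : a ≤ b := by
      apply Real.exp_le_exp.2
      have h1 : ℓ * (n:ℝ)⁻¹ ≤ ℓ' * (n:ℝ)⁻¹ := mul_le_mul_of_nonneg_right hℓ (inv_nonneg.2 hn0.le)
      have h2 : M₁ * (m:ℝ)⁻¹ ≤ M₂ * (m:ℝ)⁻¹ := mul_le_mul_of_nonneg_right hM (inv_nonneg.2 hm0.le)
      simp only [div_eq_mul_inv]
      linarith
    have hfb := hfub a b (Real.exp_pos _) hab hbδ
    have hpow : (b / a) ^ σ = Real.exp (((ℓ' - ℓ) / n + (M₂ - M₁) / m) * σ) := by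
      rw [hbdef, hadef, ← Real.exp_sub, ← Real.exp_mul]
      congr 1
      ring
    rw [hpow] at hfb
    simp only [hGdef]
    calc Real.exp ((((m:ℝ) - 1) - σ / n) * (ℓ' - ℓ) + (((n:ℝ) + 1) - σ / m) * (M₂ - M₁)) *
          (Real.exp (((m:ℝ) - 1) * ℓ + ((n:ℝ) + 1) * M₁) * f b)
        ≤ Real.exp ((((m:ℝ) - 1) - σ / n) * (ℓ' - ℓ) + (((n:ℝ) + 1) - σ / m) * (M₂ - M₁)) *
          (Real.exp (((m:ℝ) - 1) * ℓ + ((n:ℝ) + 1) * M₁) *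
            (f a * Real.exp (((ℓ' - ℓ) / n + (M₂ - M₁) / m) * σ))) := by
          apply mul_le_mul_of_nonneg_left _ (Real.exp_pos _).le
          exact mul_le_mul_of_nonneg_left hfb (Real.exp_pos _).le
      _ = Real.exp (((m:ℝ) - 1) * ℓ' + ((n:ℝ) + 1) * M₂) * f a := by
          rw [show ∀ x y w u : ℝ, x * (y * (u * w)) = x * y * w * u from fun x y w u => by ring]
          rw [← Real.exp_add, ← Real.exp_add]
          congr 2
          field_simp
          ring
  -- formulas for the two series' terms
  have hVeq : ∀ tn : ℕ, t₀ ≤ (tn:ℝ) →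
      (if t₀ ≤ (tn:ℝ) then
        Real.exp (-(m + n : ℝ) * z tn) * Real.exp ((m + n : ℝ) * tn) *
          f (Real.exp (-((m + n : ℝ) * tn) / (m * n))) else 0) = G (LL tn) (MM tn) := by
    intro tn ht
    rw [if_pos ht]
    simp only [hGdef, hLLdef, hMMdef]
    rw [← Real.exp_add]
    congr 1
    · congr 1
      push_cast
      ring
    · congr 1
      congr 1
      push_cast
      field_simp
      ring
  have hUeq : ∀ q : ℕ, T₀ ≤ (q:ℝ) → LL t₀ ≤ Real.log q →
      (if T₀ ≤ (q:ℝ) then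
        1 / (ψ q * (q:ℝ)^2) * ((q:ℝ) ^ ((1:ℝ)/n) / (ψ q) ^ ((1:ℝ)/m)) ^ (m * n) *
          f ((ψ q) ^ ((1:ℝ)/m) / (q:ℝ) ^ ((1:ℝ)/n)) else 0)
      = (1/(q:ℝ)) * G (Real.log q) (MM (τ (Real.log q))) := by
    intro q hTq hLq
    have hq0 : (0:ℝ) < q := lt_of_lt_of_le (by linarith) hTq
    have hexpℓ : Real.exp (Real.log q) = q := Real.exp_log hq0
    have hτq := hτ₁ _ hLq
    have hLτ := hτ₂ _ hLq
    have hψq : ψ (q:ℝ) = Real.exp (-(MM (τ (Real.log q)))) := by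
      have h := hψL _ hτq
      rw [hLτ, hexpℓ] at h
      exact h
    rw [if_pos hTq, hψq]
    have e1 : (q:ℝ) ^ ((1:ℝ)/n) = Real.exp (Real.log q * (1/n)) := by
      rw [Real.rpow_def_of_pos hq0]
    have e2 : Real.exp (-(MM (τ (Real.log q)))) ^ ((1:ℝ)/m)
        = Real.exp (-(MM (τ (Real.log q))) * (1/m)) := (Real.exp_mul _ _).symm
    have e3 : (q:ℝ)^2 = Real.exp (2 * Real.log q) := by
      rw [← hexpℓ, ← Real.exp_nat_mul]
      norm_num
    have e4 : 1/(q:ℝ) = Real.exp (-Real.log q) := by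
      rw [Real.exp_neg, hexpℓ, one_div]
    rw [e1, e2, e3, e4]
    rw [← Real.exp_sub, ← Real.exp_sub, ← Real.exp_nat_mul, ← Real.exp_add, one_div,
      ← Real.exp_neg, ← Real.exp_add]
    simp only [hGdef]
    rw [show ∀ x y w : ℝ, x * (y * w) = x * y * w from fun x y w => by ring, ← Real.exp_add]
    congr 1
    · congr 1
      push_cast
      field_simp
      ring
    · congr 1
      ring
  -- threshold N₀
  set Cδ : ℝ := (n:ℝ) * (-Real.log δ - MM t₀ / m) with hCδdef
  set Cbig : ℝ := max (max (Real.log T₀) 1) Cδ with hCbigdef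
  obtain ⟨T₁, hT₁0, hT₁⟩ := hz1' Cbig
  set N₀ : ℕ := ⌈max T₁ t₀⌉₊ with hN₀def
  have hN₀t₀ : t₀ ≤ (N₀:ℝ) := le_trans (le_max_right _ _) (Nat.le_ceil _)
  have hN₀T₁ : T₁ ≤ (N₀:ℝ) := le_trans (le_max_left _ _) (Nat.le_ceil _)
  have hN₀L : Cbig ≤ LL N₀ := le_trans hT₁.le (hLmono T₁ N₀ hT₁0 hN₀T₁)
  have hN₀L1 : (1:ℝ) ≤ LL N₀ := le_trans (le_trans (le_max_right _ _) (le_max_left _ _)) hN₀L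
  have hN₀LT₀ : Real.log T₀ ≤ LL N₀ :=
    le_trans (le_trans (le_max_left _ _) (le_max_left _ _)) hN₀L
  have hargδ : ∀ ℓ M', LL N₀ ≤ ℓ → MM t₀ ≤ M' → Real.exp (-(ℓ / n + M' / m)) ≤ δ := by
    intro ℓ M' h1 h2
    have hC : Cδ ≤ ℓ := le_trans (le_trans (le_max_right _ _) hN₀L) h1
    have hkey : -(ℓ / n + M' / m) ≤ Real.log δ := by
      have hd : Cδ / n ≤ ℓ / n := (div_le_div_iff_of_pos_right hn0).mpr hC
      have hCn : Cδ / n = -Real.log δ - MM t₀ / m := by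
        rw [hCδdef, mul_comm, mul_div_assoc, div_self (ne_of_gt hn0), mul_one]
      have hM' : MM t₀ / m ≤ M' / m := (div_le_div_iff_of_pos_right hm0).mpr h2
      rw [hCn] at hd
      linarith
    calc Real.exp (-(ℓ / n + M' / m)) ≤ Real.exp (Real.log δ) := Real.exp_le_exp.2 hkey
      _ = δ := Real.exp_log hδ0
  -- abstract the two series
  set Ufun : ℕ → ℝ := fun q : ℕ => if T₀ ≤ (q:ℝ) then
        1 / (ψ q * (q:ℝ)^2) * ((q:ℝ) ^ ((1:ℝ)/n) / (ψ q) ^ ((1:ℝ)/m)) ^ (m * n) *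
          f ((ψ q) ^ ((1:ℝ)/m) / (q:ℝ) ^ ((1:ℝ)/n)) else 0 with hUfundef
  set Vfun : ℕ → ℝ := fun t : ℕ => if t₀ ≤ (t:ℝ) then
        Real.exp (-(m + n : ℝ) * z t) * Real.exp ((m + n : ℝ) * t) *
          f (Real.exp (-((m + n : ℝ) * t) / (m * n))) else 0 with hVfundef
  have hVterm : ∀ tn : ℕ, t₀ ≤ (tn:ℝ) → Vfun tn = G (LL tn) (MM tn) := by
    intro tn ht
    simp only [hVfundef]
    exact hVeq tn ht
  have hUterm : ∀ q : ℕ, T₀ ≤ (q:ℝ) → LL t₀ ≤ Real.log q →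
      Ufun q = (1/(q:ℝ)) * G (Real.log q) (MM (τ (Real.log q))) := by
    intro q h1 h2
    simp only [hUfundef]
    exact hUeq q h1 h2
  have hVnn : ∀ t : ℕ, 0 ≤ Vfun t := by
    intro t
    simp only [hVfundef]
    split
    · exact mul_nonneg (mul_nonneg (Real.exp_pos _).le (Real.exp_pos _).le)
        (hfpos _ (Real.exp_pos _)).le
    · exact le_rfl
  have hUnn : ∀ q : ℕ, 0 ≤ Ufun q := by
    intro q
    simp only [hUfundef]
    split
    · rename_i hq
      have hq0 : (0:ℝ) < q := lt_of_lt_of_le (by linarith) hq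
      have hψ0 : 0 < ψ q := hψpos _ hq
      have harg : 0 < (ψ q) ^ ((1:ℝ)/m) / (q:ℝ) ^ ((1:ℝ)/n) :=
        div_pos (Real.rpow_pos_of_pos hψ0 _) (Real.rpow_pos_of_pos hq0 _)
      have h1 : (0:ℝ) ≤ 1 / (ψ q * (q:ℝ)^2) := by positivity
      have h2 : (0:ℝ) ≤ ((q:ℝ) ^ ((1:ℝ)/n) / (ψ q) ^ ((1:ℝ)/m)) ^ (m * n) := by positivity
      exact mul_nonneg (mul_nonneg h1 h2) (hfpos _ harg).le
    · exact le_rfl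
  constructor
  · -- forward: Summable Ufun → Summable Vfun
    intro hU
    rw [← summable_nat_add_iff N₀]
    set β : ℝ := ((m:ℝ) + n) / (2*n) with hβdef
    have hβ0 : 0 < β := by positivity
    set rβ : ℝ := Real.exp (-β) with hrβdef
    have hrβ0 : (0:ℝ) ≤ rβ := (Real.exp_pos _).le
    have hrβ1 : rβ < 1 := by
      rw [hrβdef, Real.exp_lt_one_iff]
      linarith
    set C₀ : ℝ := 3/2 + (m:ℝ)/(2*n) with hC₀def
    set c₄ : ℝ := (Real.exp 1 - 2) * Real.exp (-C₀ - 1) with hc₄def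
    have he2 : (2:ℝ) < Real.exp 1 := by
      have := Real.exp_one_gt_d9
      linarith
    have hc₄0 : 0 < c₄ := mul_pos (by linarith) (Real.exp_pos _)
    have claim1 : ∀ t : ℕ, N₀ ≤ t →
        c₄ * G (LL (t:ℝ)) (MM (t:ℝ)) ≤
          ∑ q ∈ Finset.Ico (⌈Real.exp (LL (t:ℝ))⌉₊) (⌈Real.exp (LL (t:ℝ) + 1)⌉₊),
            Real.exp (-β * (τ (Real.log (q:ℝ)) - (t:ℝ))) * Ufun q := by
      intro t htN
      have ht₀t : t₀ ≤ (t:ℝ) := le_trans hN₀t₀ (by exact_mod_cast htN)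
      have hLN₀t : LL (N₀:ℝ) ≤ LL (t:ℝ) := hLmono _ _ hN₀t₀ (by exact_mod_cast htN)
      have hLt1 : (1:ℝ) ≤ LL (t:ℝ) := le_trans hN₀L1 hLN₀t
      set X : ℝ := Real.exp (LL (t:ℝ)) with hXdef
      have hX0 : (0:ℝ) < X := Real.exp_pos _
      have hXe : Real.exp 1 ≤ X := Real.exp_le_exp.2 hLt1
      have hXge1 : (1:ℝ) ≤ X := le_trans (Real.one_le_exp (by norm_num)) hXe
      have hXB : Real.exp (LL (t:ℝ) + 1) = Real.exp 1 * X := by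
        rw [hXdef, ← Real.exp_add]
        congr 1
        ring
      have hperq : ∀ q ∈ Finset.Ico (⌈X⌉₊) (⌈Real.exp (LL (t:ℝ) + 1)⌉₊),
          Real.exp (-C₀ - 1) / X * G (LL (t:ℝ)) (MM (t:ℝ))
            ≤ Real.exp (-β * (τ (Real.log (q:ℝ)) - (t:ℝ))) * Ufun q := by
        intro q hq
        rw [Finset.mem_Ico] at hq
        have hXq : X ≤ (q:ℝ) := Nat.ceil_le.1 hq.1
        have hq0 : (0:ℝ) < q := lt_of_lt_of_le hX0 hXq
        have hqlt : (q:ℝ) < Real.exp (LL (t:ℝ) + 1) := Nat.lt_ceil.1 hq.2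
        have hTq : T₀ ≤ (q:ℝ) := by
          refine le_trans ?_ hXq
          calc T₀ = Real.exp (Real.log T₀) := (Real.exp_log (by linarith)).symm
            _ ≤ Real.exp (LL (N₀:ℝ)) := Real.exp_le_exp.2 hN₀LT₀
            _ ≤ X := Real.exp_le_exp.2 hLN₀t
        have hℓlow : LL (t:ℝ) ≤ Real.log q := (Real.le_log_iff_exp_le hq0).2 hXq
        have hℓhigh : Real.log q < LL (t:ℝ) + 1 := (Real.log_lt_iff_lt_exp hq0).2 hqlt
        have hLt₀q : LL t₀ ≤ Real.log q := le_trans (hLmono t₀ t le_rfl ht₀t) hℓlow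
        have hτt : (t:ℝ) ≤ τ (Real.log q) := hτ_ge _ _ ht₀t hℓlow
        have hτt₀ : t₀ ≤ τ (Real.log q) := le_trans ht₀t hτt
        have hMτ : MM (t:ℝ) ≤ MM (τ (Real.log q)) := hMmono _ _ ht₀t hτt
        have hδarg : Real.exp (-(LL (t:ℝ)/n + MM (t:ℝ)/m)) ≤ δ :=
          hargδ _ _ hLN₀t (hMmono t₀ t le_rfl ht₀t)
        have hGlow := hGlower (LL (t:ℝ)) (MM (t:ℝ)) (Real.log q) (MM (τ (Real.log q)))
          hℓlow hMτ hδarg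
        have hUq : Ufun q = (1/(q:ℝ)) * G (Real.log q) (MM (τ (Real.log q))) :=
          hUterm q hTq hLt₀q
        have hLτq : LL (τ (Real.log q)) = Real.log q := hτ₂ _ hLt₀q
        have hid1 := hLM_id (τ (Real.log q))
        have hid2 := hLM_id (t:ℝ)
        rw [hLτq] at hid1
        -- exponent bound
        have hE : -C₀ + β * (τ (Real.log q) - (t:ℝ)) ≤
            (((m:ℝ) - 1) - σ/n) * (Real.log q - LL (t:ℝ)) +
            (((n:ℝ) + 1) - σ/m) * (MM (τ (Real.log q)) - MM (t:ℝ)) := by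
          set Δℓ : ℝ := Real.log q - LL (t:ℝ) with hΔℓdef
          set ΔM : ℝ := MM (τ (Real.log q)) - MM (t:ℝ) with hΔMdef
          have hΔℓ0 : 0 ≤ Δℓ := by simp only [hΔℓdef]; linarith only [hℓlow]
          have hΔℓ1 : Δℓ ≤ 1 := by simp only [hΔℓdef]; linarith only [hℓhigh]
          have hΔM0 : 0 ≤ ΔM := by simp only [hΔMdef]; linarith only [hMτ]
          have hid : (n:ℝ) * ΔM = ((m:ℝ) + n) * (τ (Real.log q) - (t:ℝ)) - m * Δℓ := by
            simp only [hΔMdef, hΔℓdef]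
            linarith only [hid1, hid2]
          have e1 : -(3/2 : ℝ) ≤ (((m:ℝ) - 1) - σ/n) * Δℓ :=
            aux_mul_lb _ _ hcL hΔℓ0 hΔℓ1
          have e2 : ΔM/2 ≤ (((n:ℝ) + 1) - σ/m) * ΔM :=
            aux_mul_lb2 _ _ hcM hΔM0
          have e3 : (((m:ℝ) + n) * (τ (Real.log q) - (t:ℝ)) - m) / (2*n) ≤ ΔM/2 := by
            rw [div_le_div_iff₀ (by positivity) (by norm_num)]
            have hp := mul_le_mul_of_nonneg_left hΔℓ1 hm0.le
            linarith only [hp, hid]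
          have e4 : -C₀ + β * (τ (Real.log q) - (t:ℝ)) =
              -(3/2 : ℝ) + (((m:ℝ) + n) * (τ (Real.log q) - (t:ℝ)) - m) / (2*n) := by
            rw [hC₀def, hβdef]
            field_simp
            ring
          linarith only [e1, e2, e3, e4]
        have h6 : Real.exp (-C₀ + β * (τ (Real.log q) - (t:ℝ))) * G (LL (t:ℝ)) (MM (t:ℝ))
            ≤ G (Real.log q) (MM (τ (Real.log q))) :=
          le_trans (mul_le_mul_of_nonneg_right (Real.exp_le_exp.2 hE) (hGpos _ _).le) hGlow
        have h7 : Real.exp (-(LL (t:ℝ) + 1)) ≤ 1/(q:ℝ) := by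
          rw [Real.exp_neg, one_div]
          exact inv_anti₀ hq0 hqlt.le
        have h8 : Real.exp (-β * (τ (Real.log q) - (t:ℝ))) *
            Real.exp (-C₀ + β * (τ (Real.log q) - (t:ℝ))) = Real.exp (-C₀) := by
          rw [← Real.exp_add]
          congr 1
          ring
        have h9 : Real.exp (-C₀ - 1)/X = Real.exp (-(LL (t:ℝ) + 1)) * Real.exp (-C₀) := by
          rw [hXdef, div_eq_mul_inv, ← Real.exp_neg, ← Real.exp_add, ← Real.exp_add]
          congr 1
          ring
        calc Real.exp (-C₀ - 1) / X * G (LL (t:ℝ)) (MM (t:ℝ))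
            = Real.exp (-(LL (t:ℝ) + 1)) * Real.exp (-C₀) * G (LL (t:ℝ)) (MM (t:ℝ)) := by
              rw [h9]
          _ ≤ 1/(q:ℝ) * Real.exp (-C₀) * G (LL (t:ℝ)) (MM (t:ℝ)) := by
              apply mul_le_mul_of_nonneg_right _ (hGpos _ _).le
              exact mul_le_mul_of_nonneg_right h7 (Real.exp_pos _).le
          _ = Real.exp (-β * (τ (Real.log q) - (t:ℝ))) *
              (1/(q:ℝ) * (Real.exp (-C₀ + β * (τ (Real.log q) - (t:ℝ))) *
                G (LL (t:ℝ)) (MM (t:ℝ)))) := by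
              rw [← h8]
              ring
          _ ≤ Real.exp (-β * (τ (Real.log q) - (t:ℝ))) *
              (1/(q:ℝ) * G (Real.log q) (MM (τ (Real.log q)))) := by
              apply mul_le_mul_of_nonneg_left _ (Real.exp_pos _).le
              apply mul_le_mul_of_nonneg_left h6 (by positivity)
          _ = Real.exp (-β * (τ (Real.log q) - (t:ℝ))) * Ufun q := by
              rw [hUq]
      have hlb := Finset.card_nsmul_le_sum
        (Finset.Ico (⌈X⌉₊) (⌈Real.exp (LL (t:ℝ) + 1)⌉₊))
        (fun q => Real.exp (-β * (τ (Real.log (q:ℝ)) - (t:ℝ))) * Ufun q)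
        (Real.exp (-C₀ - 1) / X * G (LL (t:ℝ)) (MM (t:ℝ))) hperq
      rw [nsmul_eq_mul, Nat.card_Ico] at hlb
      have hBr : Real.exp (LL (t:ℝ) + 1) ≤ (⌈Real.exp (LL (t:ℝ) + 1)⌉₊:ℝ) := Nat.le_ceil _
      have hAr : (⌈X⌉₊:ℝ) < X + 1 := Nat.ceil_lt_add_one hX0.le
      have hprod : (0:ℝ) ≤ (Real.exp 1 - 2) * X :=
        mul_nonneg (by linarith) hX0.le
      have hBr' : Real.exp 1 * X ≤ (⌈Real.exp (LL (t:ℝ) + 1)⌉₊:ℝ) := by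
        rw [← hXB]
        exact hBr
      have hABle : ⌈X⌉₊ ≤ ⌈Real.exp (LL (t:ℝ) + 1)⌉₊ := by
        have h1 : (⌈X⌉₊:ℝ) < (⌈Real.exp (LL (t:ℝ) + 1)⌉₊:ℝ) := by
          linarith only [hAr, hBr', hXge1, hprod]
        exact_mod_cast h1.le
      have hcardlb : (Real.exp 1 - 2) * X ≤
          ((⌈Real.exp (LL (t:ℝ) + 1)⌉₊ - ⌈X⌉₊ : ℕ):ℝ) := by
        rw [Nat.cast_sub hABle]
        linarith only [hAr, hBr', hXge1, hprod]
      calc c₄ * G (LL (t:ℝ)) (MM (t:ℝ))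
          = ((Real.exp 1 - 2) * X) * (Real.exp (-C₀ - 1) / X * G (LL (t:ℝ)) (MM (t:ℝ))) := by
            rw [hc₄def]
            field_simp
        _ ≤ ((⌈Real.exp (LL (t:ℝ) + 1)⌉₊ - ⌈X⌉₊ : ℕ):ℝ) *
            (Real.exp (-C₀ - 1) / X * G (LL (t:ℝ)) (MM (t:ℝ))) := by
            apply mul_le_mul_of_nonneg_right hcardlb
            exact mul_nonneg (by positivity) (hGpos _ _).le
        _ ≤ _ := hlb
    -- assemble
    apply summable_of_sum_range_le (c := (1/c₄) * ((1 - rβ)⁻¹ * ∑' q, Ufun q)) (fun j => hVnn _)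
    intro T
    have hrβgap : (0:ℝ) < 1 - rβ := by linarith
    set Q : ℕ := ⌈Real.exp (LL ((T + N₀ : ℕ):ℝ) + 1)⌉₊ with hQdef
    have hsub : ∀ j, j < T → Finset.Ico (⌈Real.exp (LL ((j + N₀ : ℕ):ℝ))⌉₊)
        (⌈Real.exp (LL ((j + N₀ : ℕ):ℝ) + 1)⌉₊) ⊆ Finset.range Q := by
      intro j hj q hq
      rw [Finset.mem_Ico] at hq
      rw [Finset.mem_range]
      apply lt_of_lt_of_le hq.2
      apply Nat.ceil_le_ceil
      apply Real.exp_le_exp.2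
      have hc1 : ((j + N₀ : ℕ):ℝ) ≤ ((T + N₀ : ℕ):ℝ) := by
        have : j + N₀ ≤ T + N₀ := by omega
        exact_mod_cast this
      have ht₀j : t₀ ≤ ((j + N₀ : ℕ):ℝ) :=
        le_trans hN₀t₀ (by exact_mod_cast Nat.le_add_left N₀ j)
      linarith [hLmono _ _ ht₀j hc1]
    have hVle : ∀ j : ℕ, Vfun (j + N₀) ≤ (1/c₄) *
        ∑ q ∈ Finset.Ico (⌈Real.exp (LL ((j + N₀ : ℕ):ℝ))⌉₊)
          (⌈Real.exp (LL ((j + N₀ : ℕ):ℝ) + 1)⌉₊),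
          Real.exp (-β * (τ (Real.log (q:ℝ)) - ((j + N₀ : ℕ):ℝ))) * Ufun q := by
      intro j
      have hjN : N₀ ≤ j + N₀ := Nat.le_add_left _ _
      have ht₀j : t₀ ≤ ((j + N₀ : ℕ):ℝ) := le_trans hN₀t₀ (by exact_mod_cast hjN)
      have hc := claim1 (j + N₀) hjN
      rw [hVterm (j + N₀) ht₀j]
      calc G (LL ((j + N₀ : ℕ):ℝ)) (MM ((j + N₀ : ℕ):ℝ))
          = (1/c₄) * (c₄ * G (LL ((j + N₀ : ℕ):ℝ)) (MM ((j + N₀ : ℕ):ℝ))) := by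
            field_simp
        _ ≤ (1/c₄) * ∑ q ∈ Finset.Ico (⌈Real.exp (LL ((j + N₀ : ℕ):ℝ))⌉₊)
            (⌈Real.exp (LL ((j + N₀ : ℕ):ℝ) + 1)⌉₊),
            Real.exp (-β * (τ (Real.log (q:ℝ)) - ((j + N₀ : ℕ):ℝ))) * Ufun q := by
            apply mul_le_mul_of_nonneg_left hc (by positivity)
    calc ∑ j ∈ Finset.range T, Vfun (j + N₀)
        ≤ ∑ j ∈ Finset.range T, (1/c₄) *
            ∑ q ∈ Finset.Ico (⌈Real.exp (LL ((j + N₀ : ℕ):ℝ))⌉₊)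
              (⌈Real.exp (LL ((j + N₀ : ℕ):ℝ) + 1)⌉₊),
              Real.exp (-β * (τ (Real.log (q:ℝ)) - ((j + N₀ : ℕ):ℝ))) * Ufun q :=
          Finset.sum_le_sum (fun j _ => hVle j)
      _ = (1/c₄) * ∑ j ∈ Finset.range T,
            ∑ q ∈ Finset.Ico (⌈Real.exp (LL ((j + N₀ : ℕ):ℝ))⌉₊)
              (⌈Real.exp (LL ((j + N₀ : ℕ):ℝ) + 1)⌉₊),
              Real.exp (-β * (τ (Real.log (q:ℝ)) - ((j + N₀ : ℕ):ℝ))) * Ufun q := by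
          rw [← Finset.mul_sum]
      _ ≤ (1/c₄) * ((1 - rβ)⁻¹ * ∑' q, Ufun q) := by
          apply mul_le_mul_of_nonneg_left _ (by positivity)
          have h1 : ∀ j ∈ Finset.range T,
              ∑ q ∈ Finset.Ico (⌈Real.exp (LL ((j + N₀ : ℕ):ℝ))⌉₊)
                (⌈Real.exp (LL ((j + N₀ : ℕ):ℝ) + 1)⌉₊),
                Real.exp (-β * (τ (Real.log (q:ℝ)) - ((j + N₀ : ℕ):ℝ))) * Ufun q
              = ∑ q ∈ Finset.range Q,
                (if q ∈ Finset.Ico (⌈Real.exp (LL ((j + N₀ : ℕ):ℝ))⌉₊)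
                  (⌈Real.exp (LL ((j + N₀ : ℕ):ℝ) + 1)⌉₊) then
                  Real.exp (-β * (τ (Real.log (q:ℝ)) - ((j + N₀ : ℕ):ℝ))) * Ufun q else 0) := by
            intro j hj
            rw [Finset.sum_ite_mem, Finset.inter_eq_right.2 (hsub j (Finset.mem_range.1 hj))]
          rw [Finset.sum_congr rfl h1, Finset.sum_comm]
          have hinner : ∀ q ∈ Finset.range Q,
              ∑ j ∈ Finset.range T,
                (if q ∈ Finset.Ico (⌈Real.exp (LL ((j + N₀ : ℕ):ℝ))⌉₊)
                  (⌈Real.exp (LL ((j + N₀ : ℕ):ℝ) + 1)⌉₊) then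
                  Real.exp (-β * (τ (Real.log (q:ℝ)) - ((j + N₀ : ℕ):ℝ))) * Ufun q else 0)
              ≤ (1 - rβ)⁻¹ * Ufun q := by
            intro q _
            set K : ℕ := ⌊τ (Real.log (q:ℝ))⌋₊ with hKdef
            have hfacts : ∀ j : ℕ, q ∈ Finset.Ico (⌈Real.exp (LL ((j + N₀ : ℕ):ℝ))⌉₊)
                (⌈Real.exp (LL ((j + N₀ : ℕ):ℝ) + 1)⌉₊) →
                j + N₀ ≤ K ∧ Real.exp (-β * (τ (Real.log (q:ℝ)) - ((j + N₀ : ℕ):ℝ)))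
                  ≤ rβ ^ (K - (j + N₀)) := by
              intro j hcnd
              rw [Finset.mem_Ico] at hcnd
              have hXq : Real.exp (LL ((j + N₀ : ℕ):ℝ)) ≤ (q:ℝ) := Nat.ceil_le.1 hcnd.1
              have hq0 : (0:ℝ) < q := lt_of_lt_of_le (Real.exp_pos _) hXq
              have ht₀j : t₀ ≤ ((j + N₀ : ℕ):ℝ) :=
                le_trans hN₀t₀ (by exact_mod_cast Nat.le_add_left N₀ j)
              have hℓlow : LL ((j + N₀ : ℕ):ℝ) ≤ Real.log q :=
                (Real.le_log_iff_exp_le hq0).2 hXq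
              have hτt : ((j + N₀ : ℕ):ℝ) ≤ τ (Real.log q) := hτ_ge _ _ ht₀j hℓlow
              have hτ0 : (0:ℝ) ≤ τ (Real.log q) := le_trans (Nat.cast_nonneg _) hτt
              have hjK : j + N₀ ≤ K := Nat.le_floor hτt
              have hKτ : (K:ℝ) ≤ τ (Real.log q) := Nat.floor_le hτ0
              refine ⟨hjK, ?_⟩
              have h2 : Real.exp (-β * ((K:ℝ) - ((j + N₀ : ℕ):ℝ))) = rβ ^ (K - (j + N₀)) := by
                rw [hrβdef, ← Real.exp_nat_mul]
                congr 1
                rw [Nat.cast_sub hjK]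
                push_cast
                ring
              rw [← h2]
              apply Real.exp_le_exp.2
              have h3 := mul_le_mul_of_nonneg_left (sub_le_sub_right hKτ ((j + N₀ : ℕ):ℝ)) hβ0.le
              linarith only [h3]
            have hterm : ∀ j ∈ Finset.range T,
                (if q ∈ Finset.Ico (⌈Real.exp (LL ((j + N₀ : ℕ):ℝ))⌉₊)
                  (⌈Real.exp (LL ((j + N₀ : ℕ):ℝ) + 1)⌉₊) then
                  Real.exp (-β * (τ (Real.log (q:ℝ)) - ((j + N₀ : ℕ):ℝ))) * Ufun q else 0)
                ≤ (if q ∈ Finset.Ico (⌈Real.exp (LL ((j + N₀ : ℕ):ℝ))⌉₊)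
                  (⌈Real.exp (LL ((j + N₀ : ℕ):ℝ) + 1)⌉₊) then
                  rβ ^ (K - (j + N₀)) else 0) * Ufun q := by
              intro j _
              by_cases hcnd : q ∈ Finset.Ico (⌈Real.exp (LL ((j + N₀ : ℕ):ℝ))⌉₊)
                  (⌈Real.exp (LL ((j + N₀ : ℕ):ℝ) + 1)⌉₊)
              · rw [if_pos hcnd, if_pos hcnd]
                exact mul_le_mul_of_nonneg_right (hfacts j hcnd).2 (hUnn q)
              · rw [if_neg hcnd, if_neg hcnd, zero_mul]
            calc ∑ j ∈ Finset.range T,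
                  (if q ∈ Finset.Ico (⌈Real.exp (LL ((j + N₀ : ℕ):ℝ))⌉₊)
                    (⌈Real.exp (LL ((j + N₀ : ℕ):ℝ) + 1)⌉₊) then
                    Real.exp (-β * (τ (Real.log (q:ℝ)) - ((j + N₀ : ℕ):ℝ))) * Ufun q else 0)
                ≤ ∑ j ∈ Finset.range T,
                  (if q ∈ Finset.Ico (⌈Real.exp (LL ((j + N₀ : ℕ):ℝ))⌉₊)
                    (⌈Real.exp (LL ((j + N₀ : ℕ):ℝ) + 1)⌉₊) then
                    rβ ^ (K - (j + N₀)) else 0) * Ufun q := Finset.sum_le_sum hterm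
              _ = (∑ j ∈ Finset.range T,
                  (if q ∈ Finset.Ico (⌈Real.exp (LL ((j + N₀ : ℕ):ℝ))⌉₊)
                    (⌈Real.exp (LL ((j + N₀ : ℕ):ℝ) + 1)⌉₊) then
                    rβ ^ (K - (j + N₀)) else 0)) * Ufun q := by rw [Finset.sum_mul]
              _ ≤ (1 - rβ)⁻¹ * Ufun q := by
                  apply mul_le_mul_of_nonneg_right _ (hUnn q)
                  exact aux_geom rβ hrβ0 hrβ1 K N₀ T _ (fun j hc => (hfacts j hc).1)
          calc ∑ q ∈ Finset.range Q, ∑ j ∈ Finset.range T,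
                (if q ∈ Finset.Ico (⌈Real.exp (LL ((j + N₀ : ℕ):ℝ))⌉₊)
                  (⌈Real.exp (LL ((j + N₀ : ℕ):ℝ) + 1)⌉₊) then
                  Real.exp (-β * (τ (Real.log (q:ℝ)) - ((j + N₀ : ℕ):ℝ))) * Ufun q else 0)
              ≤ ∑ q ∈ Finset.range Q, (1 - rβ)⁻¹ * Ufun q := Finset.sum_le_sum hinner
            _ = (1 - rβ)⁻¹ * ∑ q ∈ Finset.range Q, Ufun q := by rw [Finset.mul_sum]
            _ ≤ (1 - rβ)⁻¹ * ∑' q, Ufun q := by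
                apply mul_le_mul_of_nonneg_left _ (inv_nonneg.2 hrβgap.le)
                exact Summable.sum_le_tsum _ (fun q _ => hUnn q) hU
  · -- backward: Summable Vfun → Summable Ufun
    intro hV
    set Q₁ : ℕ := max 2 (⌈Real.exp (LL N₀)⌉₊) with hQ₁def
    rw [← summable_nat_add_iff Q₁]
    set κ : ℕ → ℕ := fun i => ⌊τ (Real.log ((i + Q₁ : ℕ) : ℝ))⌋₊ with hκdef
    set C₅ : ℝ := Real.exp (((m:ℝ) - 1) * (((m:ℝ) + n)/m) + ((n:ℝ) + 1) * (((m:ℝ) + n)/n))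
      with hC₅def
    set C₆ : ℝ := Real.exp (((m:ℝ) + n)/m) + 1 with hC₆def
    have hqexp : ∀ i : ℕ, Real.exp (LL N₀) ≤ ((i + Q₁ : ℕ):ℝ) := by
      intro i
      calc Real.exp (LL N₀) ≤ (⌈Real.exp (LL N₀)⌉₊ : ℝ) := Nat.le_ceil _
        _ ≤ ((Q₁:ℕ):ℝ) := by exact_mod_cast le_max_right 2 (⌈Real.exp (LL N₀)⌉₊)
        _ ≤ ((i + Q₁ : ℕ):ℝ) := by exact_mod_cast Nat.le_add_left _ _
    have hq0 : ∀ i : ℕ, (0:ℝ) < ((i + Q₁ : ℕ):ℝ) :=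
      fun i => lt_of_lt_of_le (Real.exp_pos _) (hqexp i)
    have hlogq : ∀ i : ℕ, LL N₀ ≤ Real.log ((i + Q₁ : ℕ):ℝ) :=
      fun i => (Real.le_log_iff_exp_le (hq0 i)).2 (hqexp i)
    have hTq : ∀ i : ℕ, T₀ ≤ ((i + Q₁ : ℕ):ℝ) := by
      intro i
      refine le_trans ?_ (hqexp i)
      calc T₀ = Real.exp (Real.log T₀) := (Real.exp_log (by linarith)).symm
        _ ≤ Real.exp (LL N₀) := Real.exp_le_exp.2 hN₀LT₀
    have hLt₀q : ∀ i : ℕ, LL t₀ ≤ Real.log ((i + Q₁ : ℕ):ℝ) :=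
      fun i => le_trans (hLmono t₀ N₀ le_rfl hN₀t₀) (hlogq i)
    have hτiN : ∀ i : ℕ, (N₀:ℝ) ≤ τ (Real.log ((i + Q₁ : ℕ):ℝ)) :=
      fun i => hτ_ge _ _ hN₀t₀ (hlogq i)
    have hκN : ∀ i : ℕ, N₀ ≤ κ i := fun i => Nat.le_floor (hτiN i)
    have hτpos : ∀ i : ℕ, (0:ℝ) ≤ τ (Real.log ((i + Q₁ : ℕ):ℝ)) :=
      fun i => le_trans (Nat.cast_nonneg _) (hτiN i)
    have hκτ : ∀ i : ℕ, ((κ i : ℕ):ℝ) ≤ τ (Real.log ((i + Q₁ : ℕ):ℝ)) :=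
      fun i => Nat.floor_le (hτpos i)
    have hτκ1 : ∀ i : ℕ, τ (Real.log ((i + Q₁ : ℕ):ℝ)) < ((κ i : ℕ):ℝ) + 1 :=
      fun i => Nat.lt_floor_add_one _
    have ht₀κ : ∀ i : ℕ, t₀ ≤ ((κ i : ℕ):ℝ) :=
      fun i => le_trans hN₀t₀ (by exact_mod_cast hκN i)
    have ht₀τ : ∀ i : ℕ, t₀ ≤ τ (Real.log ((i + Q₁ : ℕ):ℝ)) :=
      fun i => le_trans (ht₀κ i) (hκτ i)
    have hUbound : ∀ i : ℕ, Ufun (i + Q₁) ≤ C₅ * ((1/((i + Q₁ : ℕ):ℝ)) * Vfun (κ i)) := by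
      intro i
      have hcast : (((i + Q₁ : ℕ):ℕ):ℝ) = ((i + Q₁ : ℕ):ℝ) := by norm_num
      rw [hUterm (i + Q₁) (hTq i) (hLt₀q i), hVterm (κ i) (ht₀κ i)]
      have hLκτ : LL (κ i) ≤ Real.log ((i + Q₁ : ℕ):ℝ) := by
        rw [← hτ₂ _ (hLt₀q i)]
        exact hLmono _ _ (ht₀κ i) (hκτ i)
      have hMκτ : MM (κ i) ≤ MM (τ (Real.log ((i + Q₁ : ℕ):ℝ))) :=
        hMmono _ _ (ht₀κ i) (hκτ i)
      have hG1 := hGupper (LL (κ i)) (MM (κ i)) (Real.log ((i + Q₁ : ℕ):ℝ))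
        (MM (τ (Real.log ((i + Q₁ : ℕ):ℝ)))) hLκτ hMκτ
      have hΔℓb : Real.log ((i + Q₁ : ℕ):ℝ) - LL (κ i) ≤ ((m:ℝ) + n)/m := by
        have h2 := hΔL (κ i) (τ (Real.log ((i + Q₁ : ℕ):ℝ))) (ht₀κ i) (hκτ i)
        rw [hτ₂ _ (hLt₀q i)] at h2
        have h3 : τ (Real.log ((i + Q₁ : ℕ):ℝ)) - (κ i : ℝ) ≤ 1 := by
          have := hτκ1 i
          linarith
        rw [le_div_iff₀ hm0]
        nlinarith
      have hΔMb : MM (τ (Real.log ((i + Q₁ : ℕ):ℝ))) - MM (κ i) ≤ ((m:ℝ) + n)/n := by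
        have h2 := hΔM (κ i) (τ (Real.log ((i + Q₁ : ℕ):ℝ))) (ht₀κ i) (hκτ i)
        have h3 : τ (Real.log ((i + Q₁ : ℕ):ℝ)) - (κ i : ℝ) ≤ 1 := by
          have := hτκ1 i
          linarith
        rw [le_div_iff₀ hn0]
        nlinarith
      have hexpb : Real.exp (((m:ℝ) - 1) * (Real.log ((i + Q₁ : ℕ):ℝ) - LL (κ i)) +
          ((n:ℝ) + 1) * (MM (τ (Real.log ((i + Q₁ : ℕ):ℝ))) - MM (κ i))) ≤ C₅ := by
        rw [hC₅def]
        apply Real.exp_le_exp.2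
        have hm1' : (0:ℝ) ≤ (m:ℝ) - 1 := by linarith
        have hn1' : (0:ℝ) ≤ (n:ℝ) + 1 := by linarith
        have hMnn : (0:ℝ) ≤ MM (τ (Real.log ((i + Q₁ : ℕ):ℝ))) - MM (κ i) := by linarith [hMκτ]
        have hℓnn : (0:ℝ) ≤ Real.log ((i + Q₁ : ℕ):ℝ) - LL (κ i) := by linarith [hLκτ]
        nlinarith [mul_le_mul_of_nonneg_left hΔℓb hm1', mul_le_mul_of_nonneg_left hΔMb hn1']
      have hG2 : G (Real.log ((i + Q₁ : ℕ):ℝ)) (MM (τ (Real.log ((i + Q₁ : ℕ):ℝ))))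
          ≤ C₅ * G (LL (κ i)) (MM (κ i)) :=
        hG1.trans (mul_le_mul_of_nonneg_right hexpb (hGpos _ _).le)
      rw [hcast]
      calc 1/((i + Q₁ : ℕ):ℝ) * G (Real.log ((i + Q₁ : ℕ):ℝ)) (MM (τ (Real.log ((i + Q₁ : ℕ):ℝ))))
          ≤ 1/((i + Q₁ : ℕ):ℝ) * (C₅ * G (LL (κ i)) (MM (κ i))) := by
            apply mul_le_mul_of_nonneg_left hG2
            positivity
        _ = C₅ * (1/((i + Q₁ : ℕ):ℝ) * G (LL (κ i)) (MM (κ i))) := by ring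
    apply summable_of_sum_range_le (c := C₅ * (C₆ * ∑' t, Vfun t)) (fun i => hUnn _)
    intro T
    have hsum1 : ∑ i ∈ Finset.range T, Ufun (i + Q₁)
        ≤ C₅ * ∑ i ∈ Finset.range T, (1/((i + Q₁ : ℕ):ℝ)) * Vfun (κ i) := by
      rw [Finset.mul_sum]
      exact Finset.sum_le_sum fun i _ => hUbound i
    refine hsum1.trans ?_
    have hC₅0 : (0:ℝ) ≤ C₅ := (Real.exp_pos _).le
    apply mul_le_mul_of_nonneg_left _ hC₅0
    set Tm : ℕ := (Finset.range T).sup κ + 1 with hTmdef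
    have hmaps : ∀ i ∈ Finset.range T, κ i ∈ Finset.range Tm :=
      fun i hi => Finset.mem_range.2 (Nat.lt_succ_of_le (Finset.le_sup hi))
    rw [← Finset.sum_fiberwise_of_maps_to hmaps (fun i => (1/((i + Q₁ : ℕ):ℝ)) * Vfun (κ i))]
    have hinner : ∀ t ∈ Finset.range Tm,
        ∑ i ∈ (Finset.range T).filter (fun i => κ i = t), (1/((i + Q₁ : ℕ):ℝ)) * Vfun (κ i)
          ≤ C₆ * Vfun t := by
      intro t _
      have heq1 : ∑ i ∈ (Finset.range T).filter (fun i => κ i = t),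
          (1/((i + Q₁ : ℕ):ℝ)) * Vfun (κ i)
          = Vfun t * ∑ i ∈ (Finset.range T).filter (fun i => κ i = t), (1/((i + Q₁ : ℕ):ℝ)) := by
        rw [Finset.mul_sum]
        apply Finset.sum_congr rfl
        intro i hi
        rw [(Finset.mem_filter.1 hi).2]
        ring
      rw [heq1]
      rcases Finset.eq_empty_or_nonempty ((Finset.range T).filter (fun i => κ i = t)) with he | hne
      · rw [he]
        simp only [Finset.sum_empty, mul_zero]
        have : (0:ℝ) ≤ C₆ := by rw [hC₆def]; positivity
        exact mul_nonneg this (hVnn t)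
      · obtain ⟨i₀, hi₀⟩ := hne
        have hti₀ : κ i₀ = t := (Finset.mem_filter.1 hi₀).2
        have htN : N₀ ≤ t := hti₀ ▸ hκN i₀
        have ht₀t : t₀ ≤ (t:ℝ) := le_trans hN₀t₀ (by exact_mod_cast htN)
        have hfibsum : ∑ i ∈ (Finset.range T).filter (fun i => κ i = t),
            (1/((i + Q₁ : ℕ):ℝ)) ≤ C₆ := by
          set Fb := (Finset.range T).filter (fun i => κ i = t) with hFbdef
          set a : ℝ := Real.exp (LL (t:ℝ)) with hadef
          set b : ℝ := Real.exp (LL ((t:ℝ)+1)) with hbdef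
          have ha0 : (0:ℝ) < a := Real.exp_pos _
          have hLLt0 : (0:ℝ) ≤ LL (t:ℝ) := by
            have := hLmono (N₀:ℝ) (t:ℝ) hN₀t₀ (by exact_mod_cast htN)
            linarith
          have ha1 : (1:ℝ) ≤ a := Real.one_le_exp hLLt0
          have hmemq : ∀ i ∈ Fb, a ≤ ((i + Q₁ : ℕ):ℝ) ∧ ((i + Q₁ : ℕ):ℝ) < b := by
            intro i hi
            have hκi : κ i = t := (Finset.mem_filter.1 hi).2
            have htτ : ((t:ℕ):ℝ) ≤ τ (Real.log ((i + Q₁ : ℕ):ℝ)) := by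
              rw [← hκi]
              exact hκτ i
            have hτt1 : τ (Real.log ((i + Q₁ : ℕ):ℝ)) < (t:ℝ) + 1 := by
              have := hτκ1 i
              rw [hκi] at this
              exact this
            constructor
            · have h1 : LL (t:ℝ) ≤ Real.log ((i + Q₁ : ℕ):ℝ) := by
                rw [← hτ₂ _ (hLt₀q i)]
                exact hLmono _ _ ht₀t htτ
              calc a ≤ Real.exp (Real.log ((i + Q₁ : ℕ):ℝ)) := Real.exp_le_exp.2 h1
                _ = ((i + Q₁ : ℕ):ℝ) := Real.exp_log (hq0 i)
            · have h1 : Real.log ((i + Q₁ : ℕ):ℝ) < LL ((t:ℝ)+1) := by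
                rw [← hτ₂ _ (hLt₀q i)]
                exact hLlt _ _ (ht₀τ i) hτt1
              calc ((i + Q₁ : ℕ):ℝ) = Real.exp (Real.log ((i + Q₁ : ℕ):ℝ)) :=
                    (Real.exp_log (hq0 i)).symm
                _ < b := Real.exp_lt_exp.2 h1
          have hterm : ∀ i ∈ Fb, 1/((i + Q₁ : ℕ):ℝ) ≤ a⁻¹ := by
            intro i hi
            rw [one_div]
            exact inv_anti₀ ha0 (hmemq i hi).1
          have hsum_le := Finset.sum_le_card_nsmul Fb _ a⁻¹ hterm
          rw [nsmul_eq_mul] at hsum_le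
          set A' : ℕ := ⌈a⌉₊ with hA'def
          set B' : ℕ := ⌈b⌉₊ with hB'def
          have hcard : Fb.card ≤ (Finset.Ico A' B').card := by
            apply Finset.card_le_card_of_injOn (fun i => i + Q₁)
            · intro i hi
              simp only [Finset.coe_Ico, Set.mem_Ico]
              constructor
              · exact Nat.ceil_le.2 (hmemq i hi).1
              · have h2 : ((i + Q₁ : ℕ):ℝ) < (B':ℝ) :=
                  lt_of_lt_of_le (hmemq i hi).2 (Nat.le_ceil b)
                exact_mod_cast h2
            · intro x _ y _ hxy
              exact Nat.add_right_cancel hxy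
          rw [Nat.card_Ico] at hcard
          have hba : a ≤ b := Real.exp_le_exp.2 (hLmono (t:ℝ) ((t:ℝ)+1) ht₀t (by linarith))
          have hcardR : (Fb.card : ℝ) ≤ b + 1 - a := by
            have h0 : (Fb.card : ℝ) ≤ ((B' - A' : ℕ):ℝ) := by exact_mod_cast hcard
            have hBb : (B':ℝ) ≤ b + 1 := by
              have := Nat.ceil_lt_add_one (show (0:ℝ) ≤ b by positivity)
              rw [← hB'def] at this
              linarith
            have hAa : a ≤ (A':ℝ) := Nat.le_ceil a
            rcases le_or_gt A' B' with hAB | hAB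
            · rw [Nat.cast_sub hAB] at h0
              linarith
            · have hz : B' - A' = 0 := Nat.sub_eq_zero_of_le hAB.le
              rw [hz] at h0
              simp only [Nat.cast_zero] at h0
              linarith
          have hab : b * a⁻¹ = Real.exp (LL ((t:ℝ)+1) - LL (t:ℝ)) := by
            rw [hbdef, hadef, ← Real.exp_neg, ← Real.exp_add]
            congr 1 <;> ring
          have hΔ : LL ((t:ℝ)+1) - LL (t:ℝ) ≤ ((m:ℝ)+n)/m := by
            have h2 := hΔL (t:ℝ) ((t:ℝ)+1) ht₀t (by linarith)
            rw [le_div_iff₀ hm0]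
            nlinarith
          have h5 : b * a⁻¹ ≤ Real.exp (((m:ℝ)+n)/m) := by
            rw [hab]
            exact Real.exp_le_exp.2 hΔ
          have hainv : a⁻¹ ≤ 1 := by
            rw [inv_le_one_iff₀]
            right
            exact ha1
          calc ∑ i ∈ Fb, (1/((i + Q₁ : ℕ):ℝ)) ≤ (Fb.card : ℝ) * a⁻¹ := hsum_le
            _ ≤ (b + 1 - a) * a⁻¹ := mul_le_mul_of_nonneg_right hcardR (inv_nonneg.2 ha0.le)
            _ = b * a⁻¹ + a⁻¹ - a * a⁻¹ := by ring
            _ = b * a⁻¹ + a⁻¹ - 1 := by rw [mul_inv_cancel₀ (ne_of_gt ha0)]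
            _ ≤ C₆ := by
                rw [hC₆def]
                linarith
        calc Vfun t * ∑ i ∈ (Finset.range T).filter (fun i => κ i = t), (1/((i + Q₁ : ℕ):ℝ))
            ≤ Vfun t * C₆ := mul_le_mul_of_nonneg_left hfibsum (hVnn t)
          _ = C₆ * Vfun t := mul_comm _ _
    calc ∑ t ∈ Finset.range Tm, ∑ i ∈ (Finset.range T).filter (fun i => κ i = t),
          (1/((i + Q₁ : ℕ):ℝ)) * Vfun (κ i)
        ≤ ∑ t ∈ Finset.range Tm, C₆ * Vfun t := Finset.sum_le_sum hinner
      _ = C₆ * ∑ t ∈ Finset.range Tm, Vfun t := by rw [Finset.mul_sum]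
      _ ≤ C₆ * ∑' t, Vfun t := by
          apply mul_le_mul_of_nonneg_left _ (by rw [hC₆def]; positivity)
          exact Summable.sum_le_tsum _ (fun t _ => hVnn t) hV
end
end

section
/- Let m,n be positive integers, d = m+n, and ψ : [T_0,∞) → ℝ_+ be continuous, strictly decreasing with ψ(T) → 0 as T → ∞. Define ψ̃ : [S_0,∞) → ℝ_+ by ψ̃(S) = (ψ^{−1}(S^{−m}))^{−1/n}, where S_0 = ψ(T_0)^{−1/m} and ψ^{−1} is the inverse function of ψ. Given an m×n real matrix A and b ∈ ℝ^m, if the system ‖ᵗA x‖_ℤ < d^{−1}·|b·x|_ℤ·ψ̃(S) and ‖x‖ < d^{−1}·|b·x|_ℤ·S has a nontrivial solution x ∈ ℤ^m for an unbounded set of S ≥ S_0, then (A,b) is not ψ-Dirichlet improvable. -/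
open MeasureTheory Filter Set

noncomputable section

/-- A pair `(A, b)` is `ψ`-Dirichlet improvable if for all sufficiently large `T` there exist
`p ∈ ℤ^m` and `q ∈ ℤ^n \ {0}` with `‖Aq + b - p‖^m < ψ(T)` and `‖q‖^n < T`. -/
def DirichletImprovable (m n : ℕ) (ψ : ℝ → ℝ) (A : Fin m → Fin n → ℝ) (b : Fin m → ℝ) : Prop :=
  ∀ᶠ T in Filter.atTop, ∃ (p : Fin m → ℤ) (q : Fin n → ℤ), q ≠ 0 ∧
    ‖(fun i => (∑ j, A i j * (q j : ℝ)) + b i - (p i : ℝ) : Fin m → ℝ)‖ ^ m < ψ T ∧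
    ‖toR q‖ ^ n < T

/-- `|x|_ℤ`: the distance from `x ∈ ℝ` to the nearest integer. -/
def nearInt (x : ℝ) : ℝ := ⨅ p : ℤ, |x - (p : ℝ)|

/-- `‖v‖_ℤ`: the supremum-norm distance from `v ∈ ℝ^k` to the nearest integer vector. -/
def nearIntVec {k : ℕ} (v : Fin k → ℝ) : ℝ :=
  ⨅ p : Fin k → ℤ, ‖(fun i => v i - (p i : ℝ) : Fin k → ℝ)‖

/-- **Transference lemma (Cassels)**: let `ψ̃(S) = (ψ⁻¹(S^{−m}))^{−1/n}` with
`S₀ = ψ(T₀)^{−1/m}`. If the system `‖ᵗA x‖_ℤ < d⁻¹|b·x|_ℤ ψ̃(S)`,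
`‖x‖ < d⁻¹|b·x|_ℤ S` has a nontrivial solution `x ∈ ℤ^m` for an unbounded set of
`S ≥ S₀`, then `(A, b)` is not `ψ`-Dirichlet improvable. -/
theorem stmt_16 (m n : ℕ) (hm : 0 < m) (hn : 0 < n) (d : ℕ) (hd : d = m + n)
    (T₀ : ℝ) (hT₀ : 1 < T₀)
    (ψ : ℝ → ℝ) (hψc : ContinuousOn ψ (Set.Ici T₀))
    (hψanti : StrictAntiOn ψ (Set.Ici T₀)) (hψpos : ∀ x ≥ T₀, 0 < ψ x)
    (hψ0 : Filter.Tendsto ψ Filter.atTop (nhds 0))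
    (ψinv : ℝ → ℝ)
    (hψinv : ∀ y, 0 < y → y ≤ ψ T₀ → T₀ ≤ ψinv y ∧ ψ (ψinv y) = y)
    (S₀ : ℝ) (hS₀ : S₀ = (ψ T₀) ^ (-(1:ℝ)/m))
    (A : Fin m → Fin n → ℝ) (b : Fin m → ℝ)
    (hsol : ∀ S₁ : ℝ, ∃ S : ℝ, S₀ ≤ S ∧ S₁ ≤ S ∧ ∃ x : Fin m → ℤ, x ≠ 0 ∧
      nearIntVec (fun j => ∑ i, A i j * (x i : ℝ)) <
        (d : ℝ)⁻¹ * nearInt (∑ i, b i * (x i : ℝ)) *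
          (ψinv (S ^ (-(m:ℝ)))) ^ (-(1:ℝ)/n) ∧
      ‖toR x‖ < (d : ℝ)⁻¹ * nearInt (∑ i, b i * (x i : ℝ)) * S) :
    ¬ DirichletImprovable m n ψ A b := by
  intro h
  unfold DirichletImprovable at h
  rw [Filter.eventually_atTop] at h
  obtain ⟨T₁, hT₁⟩ := h
  have hmR : (0:ℝ) < m := by exact_mod_cast hm
  have hnR : (0:ℝ) < n := by exact_mod_cast hn
  have hdR : (0:ℝ) < d := by
    have : 0 < d := hd ▸ Nat.add_pos_left hm n
    exact_mod_cast this
  have hψT₀ : 0 < ψ T₀ := hψpos T₀ le_rfl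
  set M := max T₁ T₀ with hM
  have hMT₀ : T₀ ≤ M := le_max_right _ _
  have hψM : 0 < ψ M := hψpos M hMT₀
  obtain ⟨S, hSS₀, hSS₁, x, hx0, hx1, hx2⟩ := hsol ((ψ M) ^ (-(1:ℝ)/m))
  have hS₀pos : 0 < S₀ := hS₀ ▸ Real.rpow_pos_of_pos hψT₀ _
  have hSpos : 0 < S := lt_of_lt_of_le hS₀pos hSS₀
  set y := S ^ (-(m:ℝ)) with hy
  have hypos : 0 < y := Real.rpow_pos_of_pos hSpos _
  have key : ∀ t : ℝ, 0 < ψ t → (ψ t) ^ (-(1:ℝ)/m) ≤ S → y ≤ ψ t := by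
    intro t ht hle
    have h1 : y ≤ ((ψ t) ^ (-(1:ℝ)/m)) ^ (-(m:ℝ)) :=
      Real.rpow_le_rpow_of_nonpos (Real.rpow_pos_of_pos ht _) hle
        (neg_nonpos.mpr hmR.le)
    have h2 : ((ψ t) ^ (-(1:ℝ)/m)) ^ (-(m:ℝ)) = ψ t := by
      rw [← Real.rpow_mul ht.le]
      have : (-(1:ℝ)/m) * (-(m:ℝ)) = 1 := by
        field_simp
      rw [this, Real.rpow_one]
    rw [h2] at h1; exact h1
  have hyT₀ : y ≤ ψ T₀ := key T₀ hψT₀ (hS₀ ▸ hSS₀)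
  have hyM : y ≤ ψ M := key M hψM hSS₁
  obtain ⟨hTT₀, hψinvT⟩ := hψinv y hypos hyT₀
  set T := ψinv y with hTdef
  have hTM : M ≤ T := by
    by_contra hc
    push_neg at hc
    have h2 := hψanti (mem_Ici.mpr hTT₀) (mem_Ici.mpr hMT₀) hc
    rw [hψinvT] at h2
    exact absurd hyM (not_le.mpr h2)
  have hTpos : (0:ℝ) < T := lt_of_lt_of_le (lt_trans one_pos hT₀) hTT₀
  obtain ⟨p, q, hq0, hAq, hqT⟩ := hT₁ T (le_trans (le_max_left _ _) hTM)
  set e := (fun i => (∑ j, A i j * (q j : ℝ)) + b i - (p i : ℝ) : Fin m → ℝ) with he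
  set v := (fun j => ∑ i, A i j * (x i : ℝ) : Fin n → ℝ) with hv
  set t := ∑ i, b i * (x i : ℝ) with ht
  set c := nearInt t with hc
  -- positivity of c
  have hTn : (0:ℝ) < T ^ (-(1:ℝ)/n) := Real.rpow_pos_of_pos hTpos _
  have hniv_nonneg : 0 ≤ nearIntVec v := le_ciInf fun r => norm_nonneg _
  have hcnonneg : 0 ≤ c := le_ciInf fun r => abs_nonneg _
  have hcpos : 0 < c := by
    rcases lt_or_eq_of_le hcnonneg with h' | h'
    · exact h'
    · exfalso
      rw [← h'] at hx1
      simp only [mul_zero, zero_mul] at hx1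
      exact absurd hx1 (not_lt.mpr hniv_nonneg)
  -- pick a good integer vector r close to v
  unfold nearIntVec at hx1
  obtain ⟨r, hr⟩ := exists_lt_of_ciInf_lt hx1
  set w := (fun j => v j - (r j : ℝ) : Fin n → ℝ) with hw
  -- norm bounds
  have heS : ‖e‖ < S⁻¹ := by
    have hAq' : ‖e‖ ^ m < (S⁻¹) ^ m := by
      have h2 : y = (S⁻¹) ^ m := by
        rw [hy, Real.rpow_neg hSpos.le, Real.rpow_natCast, inv_pow]
      rw [hψinvT] at hAq
      rw [← h2]
      exact hAq
    exact lt_of_pow_lt_pow_left₀ m (by positivity) hAq'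
  set u := T ^ ((1:ℝ)/n) with hu
  have hupos : (0:ℝ) < u := Real.rpow_pos_of_pos hTpos _
  have hqu : ‖toR q‖ < u := by
    have h1 : ‖toR q‖ ^ n < u ^ n := by
      have : u ^ n = T := by
        rw [hu, ← Real.rpow_natCast (T ^ ((1:ℝ)/n)) n, ← Real.rpow_mul hTpos.le,
          one_div_mul_cancel (by exact_mod_cast hn.ne' : (n:ℝ) ≠ 0), Real.rpow_one]
      rw [this]
      exact hqT
    exact lt_of_pow_lt_pow_left₀ n hupos.le h1
  have hru : T ^ (-(1:ℝ)/n) = u⁻¹ := by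
    rw [hu, neg_div, Real.rpow_neg hTpos.le]
  rw [hru] at hr
  -- the integer K
  set K : ℤ := (∑ i, p i * x i) - ∑ j, r j * q j with hK
  have hcK : c ≤ |t - (K:ℝ)| := by
    have hb : BddBelow (Set.range fun k : ℤ => |t - (k:ℝ)|) := by
      refine ⟨0, ?_⟩
      rintro z ⟨k, rfl⟩
      positivity
    exact ciInf_le hb K
  -- the key identity
  have d2 : ∑ j, v j * (q j:ℝ) = ∑ i, ∑ j, (x i:ℝ) * (A i j * (q j:ℝ)) := by
    rw [Finset.sum_comm]
    refine Finset.sum_congr rfl fun j _ => ?_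
    rw [hv]
    simp only [Finset.sum_mul]
    refine Finset.sum_congr rfl fun i _ => by ring
  have exp1 : ∑ i, (x i:ℝ) * e i
      = (∑ i, ∑ j, (x i:ℝ) * (A i j * (q j:ℝ))) + ∑ i, (x i:ℝ) * b i
        - ∑ i, (x i:ℝ) * (p i:ℝ) := by
    simp only [he, mul_add, mul_sub, Finset.mul_sum]
    rw [Finset.sum_sub_distrib, Finset.sum_add_distrib]
  have exp2 : ∑ j, w j * (q j:ℝ)
      = (∑ j, v j * (q j:ℝ)) - ∑ j, (r j:ℝ) * (q j:ℝ) := by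
    simp only [hw, sub_mul]
    rw [Finset.sum_sub_distrib]
  have cbx : ∑ i, (x i:ℝ) * b i = t := by
    rw [ht]; exact Finset.sum_congr rfl fun i _ => mul_comm _ _
  have hKcast : (K:ℝ) = (∑ i, (x i:ℝ) * (p i:ℝ)) - ∑ j, (r j:ℝ) * (q j:ℝ) := by
    rw [hK]
    push_cast
    congr 1
    exact Finset.sum_congr rfl fun i _ => mul_comm _ _
  have hident : t - (K:ℝ) = (∑ i, (x i:ℝ) * e i) - ∑ j, w j * (q j:ℝ) := by
    rw [exp1, exp2, d2, cbx, hKcast]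
    ring
  -- sum bounds
  have sum1 : |∑ i, (x i:ℝ) * e i| ≤ m * (‖toR x‖ * ‖e‖) := by
    calc |∑ i, (x i:ℝ) * e i| ≤ ∑ i, |(x i:ℝ) * e i| :=
          Finset.abs_sum_le_sum_abs _ _
      _ ≤ ∑ _i : Fin m, ‖toR x‖ * ‖e‖ := by
          refine Finset.sum_le_sum fun i _ => ?_
          rw [abs_mul]
          refine mul_le_mul ?_ ?_ (abs_nonneg _) (norm_nonneg _)
          · simpa [toR, Real.norm_eq_abs] using norm_le_pi_norm (toR x) i
          · simpa [Real.norm_eq_abs] using norm_le_pi_norm e i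
      _ = m * (‖toR x‖ * ‖e‖) := by
          simp [Finset.sum_const, nsmul_eq_mul]
  have sum2 : |∑ j, w j * (q j:ℝ)| ≤ n * (‖w‖ * ‖toR q‖) := by
    calc |∑ j, w j * (q j:ℝ)| ≤ ∑ j, |w j * (q j:ℝ)| :=
          Finset.abs_sum_le_sum_abs _ _
      _ ≤ ∑ _j : Fin n, ‖w‖ * ‖toR q‖ := by
          refine Finset.sum_le_sum fun j _ => ?_
          rw [abs_mul]
          refine mul_le_mul ?_ ?_ (abs_nonneg _) (norm_nonneg _)
          · simpa [Real.norm_eq_abs] using norm_le_pi_norm w j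
          · simpa [toR, Real.norm_eq_abs] using norm_le_pi_norm (toR q) j
      _ = n * (‖w‖ * ‖toR q‖) := by
          simp [Finset.sum_const, nsmul_eq_mul]
  -- final numeric estimates
  have hSinv : (0:ℝ) < S⁻¹ := by positivity
  have step1 : (m:ℝ) * (‖toR x‖ * ‖e‖) < m * ((d:ℝ)⁻¹ * c) := by
    have h1 : ‖toR x‖ * ‖e‖ ≤ ‖toR x‖ * S⁻¹ :=
      mul_le_mul_of_nonneg_left heS.le (norm_nonneg _)
    have h2 : ‖toR x‖ * S⁻¹ < ((d:ℝ)⁻¹ * c * S) * S⁻¹ :=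
      mul_lt_mul_of_pos_right hx2 hSinv
    have h3 : ((d:ℝ)⁻¹ * c * S) * S⁻¹ = (d:ℝ)⁻¹ * c := by
      field_simp
    exact mul_lt_mul_of_pos_left (by linarith) hmR
  have step2 : (n:ℝ) * (‖w‖ * ‖toR q‖) < n * ((d:ℝ)⁻¹ * c) := by
    have h1 : ‖w‖ * ‖toR q‖ ≤ ‖w‖ * u :=
      mul_le_mul_of_nonneg_left hqu.le (norm_nonneg _)
    have h2 : ‖w‖ * u < ((d:ℝ)⁻¹ * c * u⁻¹) * u :=
      mul_lt_mul_of_pos_right hr hupos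
    have h3 : ((d:ℝ)⁻¹ * c * u⁻¹) * u = (d:ℝ)⁻¹ * c := by
      field_simp
    exact mul_lt_mul_of_pos_left (by linarith) hnR
  have hsum : (m:ℝ) * ((d:ℝ)⁻¹ * c) + n * ((d:ℝ)⁻¹ * c) = c := by
    have hdmn : (d:ℝ) = (m:ℝ) + n := by exact_mod_cast hd
    field_simp [hdmn]
    linarith [hdmn]
  have habs : |t - (K:ℝ)| ≤ |∑ i, (x i:ℝ) * e i| + |∑ j, w j * (q j:ℝ)| := by
    rw [hident]
    exact abs_sub _ _
  linarith
end
end
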